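/- arXiv:1211.5914 — 5 statements merged into one kernel-verified Lean document; each statement's English description precedes it below -/
import Mathlib

section
/- Let Φ = {φ_n} and Ψ = {ψ_n} be two orthonormal bases of ℂ^N with mutual coherence μ = max_{j,k} |⟨φ_j, ψ_k⟩|. For any nonzero x ∈ ℂ^N, let α and β be the coefficient vectors of x in Φ and Ψ respectively. Then ‖α‖₀ · ‖β‖₀ ≥ 1/μ². -/
theorem elad_bruckstein_product
    {N : ℕ} (Φ Ψ : OrthonormalBasis (Fin N) ℂ (EuclideanSpace ℂ (Fin N)))
    (μ : ℝ) (hμ : μ = ⨆ j : Fin N, ⨆ k : Fin N, ‖(inner ℂ (Φ j) (Ψ k) : ℂ)‖)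
    (x : EuclideanSpace ℂ (Fin N)) (hx : x ≠ 0) :
    (1 : ℝ) / μ ^ 2 ≤
      ((Finset.univ.filter fun n => (inner ℂ x (Φ n) : ℂ) ≠ 0).card : ℝ) *
      ((Finset.univ.filter fun n => (inner ℂ x (Ψ n) : ℂ) ≠ 0).card : ℝ) := by
  classical
  set A := Finset.univ.filter fun n => (inner ℂ x (Φ n) : ℂ) ≠ 0 with hA
  set B := Finset.univ.filter fun n => (inner ℂ x (Ψ n) : ℂ) ≠ 0 with hB
  have hxnorm : (0:ℝ) < ‖x‖ := norm_pos_iff.mpr hx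
  have hcoh : ∀ j k : Fin N, ‖(inner ℂ (Φ j) (Ψ k) : ℂ)‖ ≤ μ := by
    intro j k
    rw [hμ]
    calc ‖(inner ℂ (Φ j) (Ψ k) : ℂ)‖
        ≤ ⨆ k : Fin N, ‖(inner ℂ (Φ j) (Ψ k) : ℂ)‖ :=
          le_ciSup (f := fun k : Fin N => ‖(inner ℂ (Φ j) (Ψ k) : ℂ)‖)
            (Set.Finite.bddAbove (Set.finite_range _)) k
      _ ≤ ⨆ j : Fin N, ⨆ k : Fin N, ‖(inner ℂ (Φ j) (Ψ k) : ℂ)‖ :=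
          le_ciSup (f := fun j : Fin N => ⨆ k : Fin N, ‖(inner ℂ (Φ j) (Ψ k) : ℂ)‖)
            (Set.Finite.bddAbove (Set.finite_range _)) j
  -- Parseval identities
  have parsevalΦ : ∑ n, ‖(inner ℂ x (Φ n) : ℂ)‖^2 = ‖x‖^2 := by
    have h := Φ.sum_inner_mul_inner x x
    have h2 : ∀ n : Fin N, (inner ℂ x (Φ n) : ℂ) * inner ℂ (Φ n) x
        = ((‖(inner ℂ x (Φ n) : ℂ)‖^2 : ℝ) : ℂ) := by
      intro n
      rw [← inner_conj_symm (Φ n) x, RCLike.mul_conj]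
      norm_cast
    rw [Finset.sum_congr rfl (fun n _ => h2 n), ← Complex.ofReal_sum,
      inner_self_eq_norm_sq_to_K] at h
    rw [← RCLike.ofReal_pow] at h
    exact RCLike.ofReal_injective (K := ℂ) h
  have parsevalΨ : ∑ n, ‖(inner ℂ x (Ψ n) : ℂ)‖^2 = ‖x‖^2 := by
    have h := Ψ.sum_inner_mul_inner x x
    have h2 : ∀ n : Fin N, (inner ℂ x (Ψ n) : ℂ) * inner ℂ (Ψ n) x
        = ((‖(inner ℂ x (Ψ n) : ℂ)‖^2 : ℝ) : ℂ) := by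
      intro n
      rw [← inner_conj_symm (Ψ n) x, RCLike.mul_conj]
      norm_cast
    rw [Finset.sum_congr rfl (fun n _ => h2 n), ← Complex.ofReal_sum,
      inner_self_eq_norm_sq_to_K] at h
    rw [← RCLike.ofReal_pow] at h
    exact RCLike.ofReal_injective (K := ℂ) h
  -- restrict sums to supports
  have parsevalΦ' : ∑ n ∈ A, ‖(inner ℂ x (Φ n) : ℂ)‖^2 = ‖x‖^2 := by
    rw [← parsevalΦ]
    refine Finset.sum_subset (Finset.filter_subset _ _) ?_
    intro n _ hn
    simp only [hA, Finset.mem_filter, Finset.mem_univ, true_and, not_not] at hn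
    simp [hn]
  have parsevalΨ' : ∑ n ∈ B, ‖(inner ℂ x (Ψ n) : ℂ)‖^2 = ‖x‖^2 := by
    rw [← parsevalΨ]
    refine Finset.sum_subset (Finset.filter_subset _ _) ?_
    intro n _ hn
    simp only [hB, Finset.mem_filter, Finset.mem_univ, true_and, not_not] at hn
    simp [hn]
  set S : ℝ := ∑ n ∈ A, ‖(inner ℂ x (Φ n) : ℂ)‖ with hS
  have hS0 : 0 ≤ S := Finset.sum_nonneg fun _ _ => norm_nonneg _
  have hμ0 : 0 ≤ μ := by
    rcases Nat.eq_zero_or_pos N with hN | hN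
    · subst hN
      exact absurd (Subsingleton.elim x 0) hx
    · exact le_trans (norm_nonneg _) (hcoh ⟨0, hN⟩ ⟨0, hN⟩)
  -- bound on each β coefficient
  have hβ : ∀ k : Fin N, ‖(inner ℂ x (Ψ k) : ℂ)‖ ≤ μ * S := by
    intro k
    have h := Φ.sum_inner_mul_inner (Ψ k) x
    have : ‖(inner ℂ (Ψ k) x : ℂ)‖ ≤ ∑ n ∈ A, ‖(inner ℂ (Ψ k) (Φ n) : ℂ)‖ * ‖(inner ℂ (Φ n) x : ℂ)‖ := by
      rw [← h]
      refine le_trans (norm_sum_le _ _) ?_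
      rw [show ∑ n : Fin N, ‖(inner ℂ (Ψ k) (Φ n) : ℂ) * inner ℂ (Φ n) x‖
          = ∑ n : Fin N, ‖(inner ℂ (Ψ k) (Φ n) : ℂ)‖ * ‖(inner ℂ (Φ n) x : ℂ)‖ from
        Finset.sum_congr rfl fun n _ => norm_mul _ _]
      refine le_of_eq (Finset.sum_subset (Finset.filter_subset _ _) ?_).symm
      intro n _ hn
      simp only [hA, Finset.mem_filter, Finset.mem_univ, true_and, not_not] at hn
      have : (inner ℂ (Φ n) x : ℂ) = 0 := by rw [← inner_conj_symm (Φ n) x, hn, map_zero]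
      simp [this]
    rw [← norm_inner_symm]
    refine le_trans this ?_
    rw [hS, Finset.mul_sum]
    refine Finset.sum_le_sum fun n _ => ?_
    have h1 : ‖(inner ℂ (Ψ k) (Φ n) : ℂ)‖ ≤ μ := by
      rw [norm_inner_symm]; exact hcoh n k
    have h2 : ‖(inner ℂ (Φ n) x : ℂ)‖ = ‖(inner ℂ x (Φ n) : ℂ)‖ := norm_inner_symm _ _
    rw [h2]
    exact mul_le_mul_of_nonneg_right h1 (norm_nonneg _)
  -- Cauchy-Schwarz: S^2 ≤ card A * ‖x‖^2
  have hCS : S^2 ≤ (A.card : ℝ) * ‖x‖^2 := by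
    rw [← parsevalΦ', hS]
    exact_mod_cast sq_sum_le_card_mul_sum_sq (s := A) (f := fun n => ‖(inner ℂ x (Φ n) : ℂ)‖)
  -- main chain
  have main : ‖x‖^2 ≤ (B.card : ℝ) * (μ^2 * ((A.card : ℝ) * ‖x‖^2)) := by
    calc ‖x‖^2 = ∑ n ∈ B, ‖(inner ℂ x (Ψ n) : ℂ)‖^2 := parsevalΨ'.symm
    _ ≤ ∑ _n ∈ B, (μ * S)^2 := by
        refine Finset.sum_le_sum fun n _ => ?_
        exact pow_le_pow_left₀ (norm_nonneg _) (hβ n) 2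
    _ = (B.card : ℝ) * (μ^2 * S^2) := by rw [Finset.sum_const, nsmul_eq_mul, mul_pow]
    _ ≤ (B.card : ℝ) * (μ^2 * ((A.card : ℝ) * ‖x‖^2)) := by
        refine mul_le_mul_of_nonneg_left (mul_le_mul_of_nonneg_left hCS (by positivity)) ?_
        positivity
  have hx2 : (0:ℝ) < ‖x‖^2 := by positivity
  have key : 1 ≤ (A.card : ℝ) * (B.card : ℝ) * μ^2 := by
    have := (mul_le_mul_iff_of_pos_right hx2).mp (by linarith [main] : 1 * ‖x‖^2 ≤ ((A.card : ℝ) * (B.card : ℝ) * μ^2) * ‖x‖^2)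
    linarith
  have hμpos : 0 < μ^2 := by
    by_contra h
    push_neg at h
    have : μ^2 = 0 := le_antisymm h (sq_nonneg μ)
    rw [this, mul_zero] at key
    linarith
  rw [div_le_iff₀ hμpos]
  linarith [key]
end

section
/- Let Φ and Ψ be two orthonormal bases of ℂ^N with mutual coherence μ. For any nonzero x ∈ ℂ^N with coefficient vectors α in Φ and β in Ψ, ‖α‖₀ + ‖β‖₀ ≥ 2/μ. -/
open Finset

set_option maxHeartbeats 1000000

theorem elad_bruckstein_sum
    {N : ℕ} (Φ Ψ : OrthonormalBasis (Fin N) ℂ (EuclideanSpace ℂ (Fin N)))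
    (μ : ℝ) (hμ : μ = ⨆ j : Fin N, ⨆ k : Fin N, ‖(inner ℂ (Φ j) (Ψ k) : ℂ)‖)
    (x : EuclideanSpace ℂ (Fin N)) (hx : x ≠ 0) :
    (2 : ℝ) / μ ≤
      ((Finset.univ.filter fun n => (inner ℂ x (Φ n) : ℂ) ≠ 0).card : ℝ) +
      ((Finset.univ.filter fun n => (inner ℂ x (Ψ n) : ℂ) ≠ 0).card : ℝ) := by
  classical
  -- N ≠ 0
  rcases Nat.eq_zero_or_pos N with hN | hN
  · subst hN
    exact absurd (Subsingleton.elim x 0) hx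
  have : Nonempty (Fin N) := ⟨⟨0, hN⟩⟩
  set a : Fin N → ℝ := fun j => ‖(inner ℂ x (Φ j) : ℂ)‖ with ha
  set b : Fin N → ℝ := fun k => ‖(inner ℂ (Ψ k) x : ℂ)‖ with hb
  set A : Finset (Fin N) := Finset.univ.filter fun n => (inner ℂ x (Φ n) : ℂ) ≠ 0 with hA
  set B : Finset (Fin N) := Finset.univ.filter fun n => (inner ℂ x (Ψ n) : ℂ) ≠ 0 with hB
  -- coherence bound
  have hcoh : ∀ j k : Fin N, ‖(inner ℂ (Φ j) (Ψ k) : ℂ)‖ ≤ μ := by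
    intro j k
    rw [hμ]
    have h1 : ‖(inner ℂ (Φ j) (Ψ k) : ℂ)‖ ≤ ⨆ k : Fin N, ‖(inner ℂ (Φ j) (Ψ k) : ℂ)‖ :=
      le_ciSup (f := fun k : Fin N => ‖(inner ℂ (Φ j) (Ψ k) : ℂ)‖)
        (Set.Finite.bddAbove (Set.finite_range _)) k
    exact h1.trans (le_ciSup (f := fun j : Fin N => ⨆ k : Fin N, ‖(inner ℂ (Φ j) (Ψ k) : ℂ)‖)
      (Set.Finite.bddAbove (Set.finite_range _)) j)
  -- key inequality
  have hxx : (‖x‖ : ℝ)^2 = ‖(inner ℂ x x : ℂ)‖ := by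
    rw [inner_self_eq_norm_sq_to_K]
    push_cast
    simp [sq_abs]
  have hexp : (inner ℂ x x : ℂ) =
      ∑ j : Fin N, ∑ k : Fin N,
        (inner ℂ x (Φ j) : ℂ) * (inner ℂ (Φ j) (Ψ k) : ℂ) * (inner ℂ (Ψ k) x : ℂ) := by
    rw [← Φ.sum_inner_mul_inner x x]
    refine Finset.sum_congr rfl fun j _ => ?_
    rw [← Ψ.sum_inner_mul_inner (Φ j) x, Finset.mul_sum]
    exact Finset.sum_congr rfl fun k _ => by ring
  have hkey : (‖x‖ : ℝ)^2 ≤ μ * ((∑ j, a j) * (∑ k, b k)) := by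
    rw [hxx, hexp]
    calc ‖∑ j : Fin N, ∑ k : Fin N,
        (inner ℂ x (Φ j) : ℂ) * (inner ℂ (Φ j) (Ψ k) : ℂ) * (inner ℂ (Ψ k) x : ℂ)‖
        ≤ ∑ j : Fin N, ∑ k : Fin N,
            ‖(inner ℂ x (Φ j) : ℂ) * (inner ℂ (Φ j) (Ψ k) : ℂ) * (inner ℂ (Ψ k) x : ℂ)‖ := by
          refine (norm_sum_le _ _).trans ?_
          exact Finset.sum_le_sum fun j _ => norm_sum_le _ _
      _ ≤ ∑ j : Fin N, ∑ k : Fin N, a j * μ * b k := by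
          refine Finset.sum_le_sum fun j _ => Finset.sum_le_sum fun k _ => ?_
          rw [norm_mul, norm_mul]
          have h1 : (0:ℝ) ≤ a j := norm_nonneg _
          have h2 : (0:ℝ) ≤ b k := norm_nonneg _
          show a j * ‖(inner ℂ (Φ j) (Ψ k) : ℂ)‖ * b k ≤ a j * μ * b k
          exact mul_le_mul_of_nonneg_right
            (mul_le_mul_of_nonneg_left (hcoh j k) h1) h2
      _ = μ * ((∑ j, a j) * (∑ k, b k)) := by
          rw [Finset.sum_mul_sum, Finset.mul_sum]
          refine Finset.sum_congr rfl fun j _ => ?_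
          rw [Finset.mul_sum]
          exact Finset.sum_congr rfl fun k _ => by ring
  -- Parseval
  have hParA : ∑ j, (a j)^2 = ‖x‖^2 := by
    have h1 : ‖Φ.repr x‖^2 = ∑ j, ‖Φ.repr x j‖^2 :=
      PiLp.norm_sq_eq_of_L2 _ (Φ.repr x)
    have h2 : ∀ j, ‖Φ.repr x j‖ = a j := fun j => by
      rw [Φ.repr_apply_apply]; exact norm_inner_symm (Φ j) x
    rw [← Φ.repr.norm_map x, h1]
    exact Finset.sum_congr rfl fun j _ => by rw [h2]
  have hParB : ∑ k, (b k)^2 = ‖x‖^2 := by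
    have h1 : ‖Ψ.repr x‖^2 = ∑ k, ‖Ψ.repr x k‖^2 :=
      PiLp.norm_sq_eq_of_L2 _ (Ψ.repr x)
    have h2 : ∀ k, ‖Ψ.repr x k‖ = b k := fun k => by rw [Ψ.repr_apply_apply]
    rw [← Ψ.repr.norm_map x, h1]
    exact Finset.sum_congr rfl fun k _ => by rw [h2]
  -- support sums
  have hsuppA : ∑ j, a j = ∑ j ∈ A, a j := by
    refine (Finset.sum_subset (Finset.subset_univ _) fun j _ hj => ?_).symm
    rw [hA, Finset.mem_filter] at hj
    push_neg at hj
    show ‖(inner ℂ x (Φ j) : ℂ)‖ = 0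
    rw [hj (Finset.mem_univ j), norm_zero]
  have hsuppB : ∑ k, b k = ∑ k ∈ B, b k := by
    refine (Finset.sum_subset (Finset.subset_univ _) fun k _ hk => ?_).symm
    rw [hB, Finset.mem_filter] at hk
    push_neg at hk
    show ‖(inner ℂ (Ψ k) x : ℂ)‖ = 0
    rw [norm_inner_symm, hk (Finset.mem_univ k), norm_zero]
  -- Cauchy-Schwarz
  have hCSA : (∑ j, a j)^2 ≤ (A.card : ℝ) * ‖x‖^2 := by
    rw [hsuppA]
    calc (∑ j ∈ A, a j)^2 ≤ (A.card : ℝ) * ∑ j ∈ A, (a j)^2 :=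
          sq_sum_le_card_mul_sum_sq
      _ ≤ (A.card : ℝ) * ∑ j, (a j)^2 := by
          refine mul_le_mul_of_nonneg_left ?_ (by positivity)
          exact Finset.sum_le_sum_of_subset_of_nonneg (Finset.subset_univ _)
            fun j _ _ => by positivity
      _ = (A.card : ℝ) * ‖x‖^2 := by rw [hParA]
  have hCSB : (∑ k, b k)^2 ≤ (B.card : ℝ) * ‖x‖^2 := by
    rw [hsuppB]
    calc (∑ k ∈ B, b k)^2 ≤ (B.card : ℝ) * ∑ k ∈ B, (b k)^2 :=
          sq_sum_le_card_mul_sum_sq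
      _ ≤ (B.card : ℝ) * ∑ k, (b k)^2 := by
          refine mul_le_mul_of_nonneg_left ?_ (by positivity)
          exact Finset.sum_le_sum_of_subset_of_nonneg (Finset.subset_univ _)
            fun k _ _ => by positivity
      _ = (B.card : ℝ) * ‖x‖^2 := by rw [hParB]
  have hxpos : (0:ℝ) < ‖x‖^2 := pow_pos (norm_pos_iff.mpr hx) 2
  have hSa : (0:ℝ) ≤ ∑ j, a j := Finset.sum_nonneg fun j _ => norm_nonneg _
  have hSb : (0:ℝ) ≤ ∑ k, b k := Finset.sum_nonneg fun k _ => norm_nonneg _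
  have hμ0 : 0 ≤ μ := le_trans (norm_nonneg _) (hcoh ⟨0, hN⟩ ⟨0, hN⟩)
  have hμpos : 0 < μ := by
    rcases hμ0.lt_or_eq with h | h
    · exact h
    · exfalso; rw [← h] at hkey; nlinarith
  rw [div_le_iff₀ hμpos]
  have hAc : (0:ℝ) ≤ (A.card : ℝ) := Nat.cast_nonneg _
  have hBc : (0:ℝ) ≤ (B.card : ℝ) := Nat.cast_nonneg _
  set Sa := ∑ j, a j
  set Sb := ∑ k, b k
  have h1 : (‖x‖^2)^2 ≤ (μ * (Sa * Sb))^2 := pow_le_pow_left₀ hxpos.le hkey 2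
  have h2 : Sa^2 * Sb^2 ≤ ((A.card : ℝ) * ‖x‖^2) * ((B.card : ℝ) * ‖x‖^2) :=
    mul_le_mul hCSA hCSB (sq_nonneg _) (by positivity)
  have h3 : (‖x‖^2)^2 ≤ (μ^2 * ((A.card : ℝ) * (B.card : ℝ))) * (‖x‖^2)^2 := by
    calc (‖x‖^2)^2 ≤ (μ * (Sa * Sb))^2 := h1
      _ = μ^2 * (Sa^2 * Sb^2) := by ring
      _ ≤ μ^2 * (((A.card : ℝ) * ‖x‖^2) * ((B.card : ℝ) * ‖x‖^2)) :=
          mul_le_mul_of_nonneg_left h2 (sq_nonneg μ)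
      _ = (μ^2 * ((A.card : ℝ) * (B.card : ℝ))) * (‖x‖^2)^2 := by ring
  have h4 : 1 ≤ μ^2 * ((A.card : ℝ) * (B.card : ℝ)) := by
    have := le_of_mul_le_mul_right (by linarith [h3] : 1 * (‖x‖^2)^2 ≤
      (μ^2 * ((A.card : ℝ) * (B.card : ℝ))) * (‖x‖^2)^2) (by positivity)
    linarith
  have ht0 : 0 ≤ ((A.card : ℝ) + (B.card : ℝ)) * μ := by positivity
  have h5 : 4 ≤ (((A.card : ℝ) + (B.card : ℝ)) * μ)^2 := by
    nlinarith [sq_nonneg (μ * (A.card : ℝ) - μ * (B.card : ℝ)), h4]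
  nlinarith [h5, ht0]
end

section
/- Let Φ and Ψ be orthonormal bases of ℂ^N with mutual coherence μ. For any x ∈ ℂ^N with ‖x‖₂ = 1, the Shannon entropies of the squared-modulus coefficient distributions satisfy S(α) + S(β) ≥ −2 ln μ, where S(α) = −Σ_n |α_n|² ln |α_n|². -/
open Real Set

/-- Parseval for orthonormal bases of ℂ^N. -/
lemma mu_sum_sq {N : ℕ} (b : OrthonormalBasis (Fin N) ℂ (EuclideanSpace ℂ (Fin N)))
    (x : EuclideanSpace ℂ (Fin N)) :
    ∑ j, ‖(inner ℂ x (b j) : ℂ)‖ ^ 2 = ‖x‖ ^ 2 := by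
  have h := b.sum_inner_mul_inner x x
  have h2 : ∀ j, (inner ℂ x (b j) : ℂ) * inner ℂ (b j) x = (‖(inner ℂ x (b j) : ℂ)‖ ^ 2 : ℝ) := by
    intro j
    rw [← inner_conj_symm x (b j), mul_comm, Complex.mul_conj']
    rw [RCLike.norm_conj]; push_cast; ring
  rw [Finset.sum_congr rfl (fun j _ => h2 j)] at h
  rw [inner_self_eq_norm_sq_to_K] at h
  exact_mod_cast congrArg Complex.re h

lemma mu_rpow_le_max {r e : ℝ} (hr : 0 ≤ r) (he0 : 0 ≤ e) (he2 : e ≤ 2) :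
    r ^ e ≤ max 1 (r ^ (2 : ℝ)) := by
  rcases le_total r 1 with h | h
  · exact le_max_of_le_left (Real.rpow_le_one hr h he0)
  · exact le_max_of_le_right (Real.rpow_le_rpow_of_exponent_le h he2)

lemma mu_rpow_le_max' {A e : ℝ} (hA : 0 < A) (h1 : -1 ≤ e) (h2 : e ≤ 1) :
    A ^ e ≤ max A A⁻¹ := by
  rcases le_total A 1 with h | h
  · have h3 : A ^ e ≤ A ^ (-1 : ℝ) := Real.rpow_le_rpow_of_exponent_ge hA h h1
    rw [Real.rpow_neg_one] at h3
    exact le_max_of_le_right h3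
  · refine le_max_of_le_left ?_
    simpa using Real.rpow_le_rpow_of_exponent_le h h2

lemma mu_exp_interp {r A s : ℝ} (hr : 0 ≤ r) (hA : 0 < A) (hs : 0 < s) :
    r * Real.exp ((s - 1) * Real.log r + (1 - s) * Real.log A) = r ^ s * A ^ (1 - s) := by
  rcases eq_or_lt_of_le hr with h | h
  · rw [← h, Real.zero_rpow (ne_of_gt hs), zero_mul, zero_mul]
  · rw [Real.exp_add, mul_comm ((s-1)) _, mul_comm ((1-s)) _,
      ← Real.rpow_def_of_pos h, ← Real.rpow_def_of_pos hA]
    rw [← mul_assoc]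
    congr 1
    rw [← Real.rpow_one_add' (le_of_lt h) (by simpa using ne_of_gt hs)]
    ring_nf

lemma mu_exp_interp' {r s : ℝ} (hr : 0 ≤ r) (hs : 0 < s) :
    r * Real.exp ((s - 1) * Real.log r) = r ^ s := by
  have := mu_exp_interp hr one_pos hs
  simpa using this

set_option maxHeartbeats 1600000 in
/-- The key interpolation inequality (Riesz–Thorin style, via Hadamard three lines). -/
lemma mu_key {N : ℕ} (Φ Ψ : OrthonormalBasis (Fin N) ℂ (EuclideanSpace ℂ (Fin N)))
    {μ : ℝ} (hμ0 : 0 < μ) (hM : ∀ j k, ‖(inner ℂ (Φ j) (Ψ k) : ℂ)‖ ≤ μ)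
    (x : EuclideanSpace ℂ (Fin N)) (hx : ‖x‖ = 1) {θ : ℝ} (hθ : θ ∈ Ioo (0:ℝ) 1) :
    (∑ k, (‖(inner ℂ x (Ψ k) : ℂ)‖ ^ 2) ^ ((1-θ)⁻¹)) ^ ((1-θ)/2) ≤
      μ ^ θ * (∑ j, (‖(inner ℂ x (Φ j) : ℂ)‖ ^ 2) ^ ((1+θ)⁻¹)) ^ ((1+θ)/2) := by
  classical
  obtain ⟨hθ0, hθ1⟩ := hθ
  have h1p : (0:ℝ) < 1 + θ := by linarith
  have h1m : (0:ℝ) < 1 - θ := by linarith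
  set α : Fin N → ℂ := fun j => (inner ℂ x (Φ j) : ℂ) with hαdef
  set β : Fin N → ℂ := fun k => (inner ℂ x (Ψ k) : ℂ) with hβdef
  set M : Fin N → Fin N → ℂ := fun j k => (inner ℂ (Φ j) (Ψ k) : ℂ) with hMdef
  set pp : ℝ := 2 * (1+θ)⁻¹ with hppdef
  set qq : ℝ := 2 * (1-θ)⁻¹ with hqqdef
  have hpp0 : 0 < pp := by positivity
  have hpple : pp ≤ 2 := by
    rw [hppdef]
    have h2 : (1+θ)⁻¹ ≤ 1 := by
      rw [inv_le_one_iff₀]; right; linarith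
    linarith
  have hqq2 : 2 < qq := by
    have hinv : (1-θ) * (1-θ)⁻¹ = 1 := mul_inv_cancel₀ h1m.ne'
    have h2 : 0 < θ * (1-θ)⁻¹ := mul_pos hθ0 (inv_pos.mpr h1m)
    rw [hqqdef]; nlinarith
  -- basic identities
  have hid1 : (qq - 1) * pp = qq := by rw [hppdef, hqqdef]; field_simp; ring
  have hid2 : qq + (1 - qq) * pp = 0 := by rw [hppdef, hqqdef]; field_simp; ring
  have hβexp : ∀ k, β k = ∑ j, α j * M j k := fun k => (Φ.sum_inner_mul_inner x (Ψ k)).symm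
  have hαsum : ∑ j, ‖α j‖ ^ 2 = 1 := by
    rw [hαdef, mu_sum_sq Φ x, hx, one_pow]
  set SA : ℝ := ∑ j, ‖α j‖ ^ pp with hSAdef
  have hSApos : 0 < SA := by
    obtain ⟨j0, hj0⟩ : ∃ j, α j ≠ 0 := by
      by_contra h
      push_neg at h
      simp [h] at hαsum
    refine lt_of_lt_of_le (Real.rpow_pos_of_pos (norm_pos_iff.mpr hj0) pp) ?_
    exact Finset.single_le_sum (fun j _ => Real.rpow_nonneg (norm_nonneg _) _)
      (Finset.mem_univ j0)
  set A : ℝ := SA ^ ((1+θ)/2) with hAdef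
  have hA : 0 < A := Real.rpow_pos_of_pos hSApos _
  have hSAA : A ^ pp = SA := by
    rw [hAdef, ← Real.rpow_mul hSApos.le,
      show (1+θ)/2 * pp = 1 by rw [hppdef]; field_simp, Real.rpow_one]
  set SB : ℝ := ∑ k, ‖β k‖ ^ qq with hSBdef
  -- rewrite the goal
  have hgoalL : ∑ k, (‖β k‖ ^ 2) ^ ((1-θ)⁻¹) = SB := by
    refine Finset.sum_congr rfl fun k _ => ?_
    rw [← Real.rpow_natCast ‖β k‖ 2, ← Real.rpow_mul (norm_nonneg _)]
    norm_num [hqqdef]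
  have hgoalR : ∑ j, (‖α j‖ ^ 2) ^ ((1+θ)⁻¹) = SA := by
    refine Finset.sum_congr rfl fun j _ => ?_
    rw [← Real.rpow_natCast ‖α j‖ 2, ← Real.rpow_mul (norm_nonneg _)]
    norm_num [hppdef]
  rw [hgoalL, hgoalR]
  show SB ^ ((1-θ)/2) ≤ μ ^ θ * A
  by_cases hSB0 : SB = 0
  · rw [hSB0, Real.zero_rpow (by positivity)]
    positivity
  have hSBpos : 0 < SB :=
    lt_of_le_of_ne (Finset.sum_nonneg fun k _ => Real.rpow_nonneg (norm_nonneg _) _)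
      (Ne.symm hSB0)
  set B : ℝ := SB ^ ((1-θ)/2) with hBdef
  have hB : 0 < B := Real.rpow_pos_of_pos hSBpos _
  have hSBB : B ^ qq = SB := by
    rw [hBdef, ← Real.rpow_mul hSBpos.le,
      show (1-θ)/2 * qq = 1 by rw [hqqdef]; field_simp, Real.rpow_one]
  -- the dual vector γ
  set γ : Fin N → ℂ := fun k => (↑(‖β k‖ ^ (qq-2)) * (starRingEnd ℂ) (β k) * ↑(B ^ (1-qq)) : ℂ)
    with hγdef
  have hγnorm : ∀ k, ‖γ k‖ = ‖β k‖ ^ (qq-1) * B ^ (1-qq) := by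
    intro k
    rw [hγdef]
    simp only [norm_mul, Complex.norm_real, RCLike.norm_conj, Real.norm_eq_abs]
    rw [abs_of_nonneg (Real.rpow_nonneg (norm_nonneg _) _),
      abs_of_nonneg (Real.rpow_nonneg hB.le _)]
    rw [show qq - 1 = (qq-2) + 1 by ring,
      Real.rpow_add' (norm_nonneg _) (by intro h; nlinarith), Real.rpow_one]
  have hγsumβ : ∑ k, β k * γ k = (B : ℂ) := by
    have hterm : ∀ k, β k * γ k = ((‖β k‖ ^ qq * B ^ (1-qq) : ℝ) : ℂ) := by
      intro k
      rw [hγdef]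
      have h1 : β k * (↑(‖β k‖ ^ (qq-2)) * (starRingEnd ℂ) (β k) * ↑(B ^ (1-qq)))
          = (β k * (starRingEnd ℂ) (β k)) * ↑(‖β k‖ ^ (qq-2)) * ↑(B ^ (1-qq)) := by ring
      rw [h1, Complex.mul_conj']
      have h2 : ‖β k‖ ^ qq = ‖β k‖ ^ (2:ℕ) * ‖β k‖ ^ (qq - 2) := by
        rw [← Real.rpow_natCast ‖β k‖ 2,
          ← Real.rpow_add' (norm_nonneg _) (by push_cast; intro h; nlinarith)]
        norm_num
      rw [h2]
      push_cast
      ring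
    rw [Finset.sum_congr rfl fun k _ => hterm k, ← Complex.ofReal_sum]
    have h3 : ∑ k, ‖β k‖ ^ qq * B ^ (1-qq) = SB * B ^ (1-qq) := by
      rw [← Finset.sum_mul]
    rw [h3, ← hSBB, ← Real.rpow_add hB]
    norm_num
  have hγsum : ∑ k, ‖γ k‖ ^ pp = 1 := by
    have hterm : ∀ k, ‖γ k‖ ^ pp = ‖β k‖ ^ qq * B ^ ((1-qq)*pp) := by
      intro k
      rw [hγnorm k,
        Real.mul_rpow (Real.rpow_nonneg (norm_nonneg _) _) (Real.rpow_nonneg hB.le _),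
        ← Real.rpow_mul (norm_nonneg _), ← Real.rpow_mul hB.le, hid1]
    rw [Finset.sum_congr rfl fun k _ => hterm k, ← Finset.sum_mul]
    have h3 : (∑ k, ‖β k‖ ^ qq) = SB := rfl
    rw [h3, ← hSBB, ← Real.rpow_add hB, hid2, Real.rpow_zero]
  -- the analytic family
  set e : ℂ → ℂ := fun z => (((1+θ)⁻¹ : ℝ) : ℂ) * (1 + z) with hedef
  set a : Fin N → ℂ → ℂ := fun j z =>
    α j * Complex.exp ((e z - 1) * (Real.log ‖α j‖ : ℂ) + (1 - e z) * (Real.log A : ℂ))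
    with hadef
  set c : Fin N → ℂ → ℂ := fun k z =>
    γ k * Complex.exp ((e z - 1) * (Real.log ‖γ k‖ : ℂ)) with hcdef
  set F : ℂ → ℂ := fun z => ∑ j, ∑ k, a j z * M j k * c k z with hFdef
  have here : ∀ z : ℂ, (e z).re = (1+θ)⁻¹ * (1 + z.re) := by
    intro z
    rw [hedef]
    simp only [Complex.re_ofReal_mul, Complex.add_re, Complex.one_re]
  have hexp_re : ∀ (w : ℂ) (L : ℝ), (w * (L:ℂ)).re = w.re * L := by
    intro w L
    simp [Complex.mul_re]
  have hna : ∀ (j : Fin N) (z : ℂ), 0 ≤ z.re →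
      ‖a j z‖ = ‖α j‖ ^ ((1+θ)⁻¹ * (1+z.re)) * A ^ (1 - (1+θ)⁻¹*(1+z.re)) := by
    intro j z hz
    have hs : 0 < (1+θ)⁻¹ * (1+z.re) := by
      have : (0:ℝ) < 1 + z.re := by linarith
      positivity
    rw [hadef]
    simp only []
    rw [norm_mul, Complex.norm_exp]
    rw [Complex.add_re, hexp_re, hexp_re, Complex.sub_re, Complex.one_re, Complex.sub_re,
      Complex.one_re, here]
    exact mu_exp_interp (norm_nonneg _) hA hs
  have hnc : ∀ (k : Fin N) (z : ℂ), 0 ≤ z.re →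
      ‖c k z‖ = ‖γ k‖ ^ ((1+θ)⁻¹ * (1+z.re)) := by
    intro k z hz
    have hs : 0 < (1+θ)⁻¹ * (1+z.re) := by
      have : (0:ℝ) < 1 + z.re := by linarith
      positivity
    rw [hcdef]
    simp only []
    rw [norm_mul, Complex.norm_exp]
    rw [hexp_re, Complex.sub_re, Complex.one_re, here]
    exact mu_exp_interp' (norm_nonneg _) hs
  have hdiffF : Differentiable ℂ F := by
    rw [hFdef]
    refine Differentiable.fun_sum fun j _ => Differentiable.fun_sum fun k _ => ?_
    have he : Differentiable ℂ e := by
      rw [hedef]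
      exact (differentiable_const _).mul ((differentiable_const _).add differentiable_id)
    have ha' : Differentiable ℂ (a j) := by
      rw [hadef]
      exact (differentiable_const _).mul
        ((((he.sub_const 1).mul_const _).add (((differentiable_const 1).sub he).mul_const _)).cexp)
    have hc' : Differentiable ℂ (c k) := by
      rw [hcdef]
      exact (differentiable_const _).mul (((he.sub_const 1).mul_const _).cexp)
    exact (ha'.mul_const _).mul hc'
  -- value at θ
  have heθ : e (θ:ℂ) = 1 := by
    rw [hedef]
    have h2 : ((1:ℂ) + (θ:ℂ)) = ((1+θ:ℝ) : ℂ) := by push_cast; ring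
    show ((((1+θ)⁻¹ : ℝ)) : ℂ) * (1 + (θ:ℂ)) = 1
    rw [h2, ← Complex.ofReal_mul, inv_mul_cancel₀ h1p.ne', Complex.ofReal_one]
  have haθ : ∀ j, a j (θ:ℂ) = α j := by
    intro j
    rw [hadef]
    simp [heθ]
  have hcθ : ∀ k, c k (θ:ℂ) = γ k := by
    intro k
    rw [hcdef]
    simp [heθ]
  have hFθ : F (θ:ℂ) = (B:ℂ) := by
    rw [hFdef]
    simp only [haθ, hcθ]
    rw [Finset.sum_comm]
    have h1 : ∀ k, ∑ j, α j * M j k * γ k = β k * γ k := by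
      intro k
      rw [hβexp k, Finset.sum_mul]
    rw [Finset.sum_congr rfl fun k _ => h1 k, hγsumβ]
  -- sums of norms of a and c
  have hsum_c_pp : ∀ z : ℂ, z.re = 1 → ∑ k, ‖c k z‖ = 1 := by
    intro z hz
    have h1 : ∀ k, ‖c k z‖ = ‖γ k‖ ^ pp := by
      intro k
      rw [hnc k z (by rw [hz]; norm_num), hz, hppdef]
      ring_nf
    rw [Finset.sum_congr rfl fun k _ => h1 k, hγsum]
  have hsum_a_pp : ∀ z : ℂ, z.re = 1 → ∑ j, ‖a j z‖ = A := by
    intro z hz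
    have h1 : ∀ j, ‖a j z‖ = ‖α j‖ ^ pp * A ^ (1 - pp) := by
      intro j
      rw [hna j z (by rw [hz]; norm_num), hz, hppdef]
      ring_nf
    rw [Finset.sum_congr rfl fun j _ => h1 j, ← Finset.sum_mul]
    have h2 : (∑ j, ‖α j‖ ^ pp) = SA := rfl
    rw [h2, ← hSAA, ← Real.rpow_add hA]
    norm_num
  -- boundary bound on re = 1
  have hbd1 : ∀ z : ℂ, z.re = 1 → ‖F z‖ ≤ μ * A := by
    intro z hz
    rw [hFdef]
    calc ‖∑ j, ∑ k, a j z * M j k * c k z‖ ≤ ∑ j, ∑ k, ‖a j z * M j k * c k z‖ := by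
          refine (norm_sum_le _ _).trans (Finset.sum_le_sum fun j _ => norm_sum_le _ _)
      _ ≤ ∑ j, ∑ k, ‖a j z‖ * μ * ‖c k z‖ := by
          refine Finset.sum_le_sum fun j _ => Finset.sum_le_sum fun k _ => ?_
          rw [norm_mul, norm_mul]
          have h1 : ‖a j z‖ * ‖M j k‖ ≤ ‖a j z‖ * μ :=
            mul_le_mul_of_nonneg_left (hM j k) (norm_nonneg _)
          exact mul_le_mul_of_nonneg_right h1 (norm_nonneg _)
      _ = μ * ((∑ j, ‖a j z‖) * (∑ k, ‖c k z‖)) := by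
          rw [Finset.sum_mul_sum]
          rw [Finset.mul_sum]
          refine Finset.sum_congr rfl fun j _ => ?_
          rw [Finset.mul_sum]
          refine Finset.sum_congr rfl fun k _ => ?_
          ring
      _ = μ * A := by rw [hsum_a_pp z hz, hsum_c_pp z hz, mul_one]
  -- boundary bound on re = 0
  have hbd0 : ∀ z : ℂ, z.re = 0 → ‖F z‖ ≤ A := by
    intro z hz
    set v : EuclideanSpace ℂ (Fin N) := WithLp.toLp 2 (fun j => (starRingEnd ℂ) (a j z)) with hvdef
    set u : EuclideanSpace ℂ (Fin N) := WithLp.toLp 2 (fun k => c k z) with hudef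
    have hFinner : F z = inner ℂ (Φ.repr.symm v) (Ψ.repr.symm u) := by
      rw [← Φ.sum_repr_symm v, ← Ψ.sum_repr_symm u, sum_inner, hFdef]
      refine Finset.sum_congr rfl fun j _ => ?_
      rw [inner_smul_left, inner_sum, Finset.mul_sum]
      refine Finset.sum_congr rfl fun k _ => ?_
      rw [inner_smul_right, hvdef, hudef]
      simp only [PiLp.toLp_apply, Complex.conj_conj]
      ring
    have hle : ‖F z‖ ≤ ‖Φ.repr.symm v‖ * ‖Ψ.repr.symm u‖ := by
      rw [hFinner]
      exact norm_inner_le_norm _ _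
    rw [LinearIsometryEquiv.norm_map, LinearIsometryEquiv.norm_map] at hle
    have hna0 : ∀ j, ‖a j z‖ = ‖α j‖ ^ ((1+θ)⁻¹) * A ^ (1 - (1+θ)⁻¹) := by
      intro j
      rw [hna j z (by rw [hz]), hz]
      norm_num
    have hnc0 : ∀ k, ‖c k z‖ = ‖γ k‖ ^ ((1+θ)⁻¹) := by
      intro k
      rw [hnc k z (by rw [hz]), hz]
      norm_num
    have hv : ‖v‖ = A := by
      rw [EuclideanSpace.norm_eq]
      have h1 : ∀ j, ‖v j‖ ^ 2 = ‖α j‖ ^ pp * A ^ (2 - pp) := by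
        intro j
        rw [hvdef]
        show ‖(starRingEnd ℂ) (a j z)‖ ^ 2 = _
        rw [RCLike.norm_conj, hna0 j, mul_pow,
          ← Real.rpow_natCast (‖α j‖ ^ ((1+θ)⁻¹)) 2, ← Real.rpow_natCast (A ^ (1 - (1+θ)⁻¹)) 2,
          ← Real.rpow_mul (norm_nonneg _), ← Real.rpow_mul hA.le,
          show ((1+θ)⁻¹ * ((2:ℕ):ℝ)) = pp by rw [hppdef]; push_cast; ring,
          show ((1 - (1+θ)⁻¹) * ((2:ℕ):ℝ)) = 2 - pp by rw [hppdef]; push_cast; ring]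
      rw [Finset.sum_congr rfl fun j _ => h1 j, ← Finset.sum_mul]
      have h2 : (∑ j, ‖α j‖ ^ pp) = SA := rfl
      rw [h2, ← hSAA, ← Real.rpow_add hA]
      rw [show pp + (2 - pp) = ((2:ℕ):ℝ) by norm_num, Real.rpow_natCast]
      exact Real.sqrt_sq hA.le
    have hu : ‖u‖ = 1 := by
      rw [EuclideanSpace.norm_eq]
      have h1 : ∀ k, ‖u k‖ ^ 2 = ‖γ k‖ ^ pp := by
        intro k
        rw [hudef]
        show ‖c k z‖ ^ 2 = _
        rw [hnc0 k, ← Real.rpow_natCast (‖γ k‖ ^ ((1+θ)⁻¹)) 2,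
          ← Real.rpow_mul (norm_nonneg _),
          show ((1+θ)⁻¹ * ((2:ℕ):ℝ)) = pp by rw [hppdef]; push_cast; ring]
      rw [Finset.sum_congr rfl fun k _ => h1 k, hγsum, Real.sqrt_one]
    rw [hv, hu, mul_one] at hle
    exact hle
  -- boundedness on the strip
  have hmax1 : ∀ t : ℝ, (0:ℝ) ≤ max 1 t := fun t => le_trans zero_le_one (le_max_left 1 t)
  have hmaxA : (0:ℝ) ≤ max A A⁻¹ := le_trans hA.le (le_max_left _ _)
  have hbdd : BddAbove ((norm ∘ F) '' (Complex.HadamardThreeLines.verticalClosedStrip 0 1)) := by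
    refine ⟨∑ j, ∑ k, max 1 (‖α j‖ ^ (2:ℝ)) * max A A⁻¹ * μ * max 1 (‖γ k‖ ^ (2:ℝ)), ?_⟩
    rintro y ⟨z, hz, rfl⟩
    have hz' : z.re ∈ Icc (0:ℝ) 1 := hz
    obtain ⟨hz0, hz1⟩ := hz'
    have hs1 : (1+θ)⁻¹ * (1 + z.re) ≤ 2 := by
      have h2 : (1+θ)⁻¹ ≤ 1 := by rw [inv_le_one_iff₀]; right; linarith
      have h3 : (1 + z.re) ≤ 2 := by linarith
      have h4 : (0:ℝ) ≤ 1 + z.re := by linarith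
      nlinarith
    have hs0 : 0 ≤ (1+θ)⁻¹ * (1 + z.re) := by positivity
    show ‖F z‖ ≤ _
    calc ‖F z‖ ≤ ∑ j, ∑ k, ‖a j z‖ * ‖M j k‖ * ‖c k z‖ := by
          rw [hFdef]
          refine (norm_sum_le _ _).trans (Finset.sum_le_sum fun j _ => ?_)
          refine (norm_sum_le _ _).trans (Finset.sum_le_sum fun k _ => ?_)
          rw [norm_mul, norm_mul]
      _ ≤ ∑ j, ∑ k, max 1 (‖α j‖ ^ (2:ℝ)) * max A A⁻¹ * μ * max 1 (‖γ k‖ ^ (2:ℝ)) := by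
          refine Finset.sum_le_sum fun j _ => Finset.sum_le_sum fun k _ => ?_
          have h1 : ‖a j z‖ ≤ max 1 (‖α j‖ ^ (2:ℝ)) * max A A⁻¹ := by
            rw [hna j z hz0]
            exact mul_le_mul (mu_rpow_le_max (norm_nonneg _) hs0 hs1)
              (mu_rpow_le_max' hA (by linarith) (by linarith))
              (Real.rpow_nonneg hA.le _) (hmax1 _)
          have h2 : ‖c k z‖ ≤ max 1 (‖γ k‖ ^ (2:ℝ)) := by
            rw [hnc k z hz0]
            exact mu_rpow_le_max (norm_nonneg _) hs0 hs1
          refine mul_le_mul (mul_le_mul h1 (hM j k) (norm_nonneg _) ?_) h2 (norm_nonneg _) ?_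
          · exact mul_nonneg (hmax1 _) hmaxA
          · exact mul_nonneg (mul_nonneg (hmax1 _) hmaxA) hμ0.le
  -- apply the three-lines theorem
  have hmem : (θ:ℂ) ∈ Complex.HadamardThreeLines.verticalClosedStrip 0 1 := by
    simp only [Complex.HadamardThreeLines.verticalClosedStrip, Set.mem_preimage,
      Complex.ofReal_re, Set.mem_Icc]
    exact ⟨hθ0.le, hθ1.le⟩
  have h3 := Complex.HadamardThreeLines.norm_le_interp_of_mem_verticalClosedStrip' (f := F) zero_lt_one hmem
    hdiffF.diffContOnCl hbdd
    (fun z hz => hbd0 z (by simpa using hz))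
    (fun z hz => hbd1 z (by simpa using hz))
  rw [hFθ] at h3
  rw [Complex.norm_real, Real.norm_of_nonneg hB.le, Complex.ofReal_re] at h3
  calc B ≤ A ^ (1-θ) * (μ*A) ^ θ := by simpa using h3
    _ = μ ^ θ * A := by
        rw [Real.mul_rpow hμ0.le hA.le,
          show A ^ (1-θ) * (μ^θ * A^θ) = μ^θ * (A^(1-θ) * A^θ) by ring,
          ← Real.rpow_add hA]
        norm_num

theorem maassen_uffink
    {N : ℕ} (Φ Ψ : OrthonormalBasis (Fin N) ℂ (EuclideanSpace ℂ (Fin N)))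
    (μ : ℝ) (hμ : μ = ⨆ j : Fin N, ⨆ k : Fin N, ‖(inner ℂ (Φ j) (Ψ k) : ℂ)‖)
    (x : EuclideanSpace ℂ (Fin N)) (hx : ‖x‖ = 1) :
    (-∑ n, ‖(inner ℂ x (Φ n) : ℂ)‖ ^ 2 * Real.log (‖(inner ℂ x (Φ n) : ℂ)‖ ^ 2)) +
    (-∑ n, ‖(inner ℂ x (Ψ n) : ℂ)‖ ^ 2 * Real.log (‖(inner ℂ x (Ψ n) : ℂ)‖ ^ 2)) ≥
      -2 * Real.log μ := by
  classical
  set p : Fin N → ℝ := fun j => ‖(inner ℂ x (Φ j) : ℂ)‖ ^ 2 with hp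
  set q : Fin N → ℝ := fun k => ‖(inner ℂ x (Ψ k) : ℂ)‖ ^ 2 with hq
  have hp0 : ∀ j, 0 ≤ p j := fun j => by positivity
  have hq0 : ∀ k, 0 ≤ q k := fun k => by positivity
  have hps : ∑ j, p j = 1 := by
    rw [hp]; rw [mu_sum_sq Φ x, hx]; norm_num
  have hqs : ∑ k, q k = 1 := by
    rw [hq]; rw [mu_sum_sq Ψ x, hx]; norm_num
  -- N ≠ 0
  have hN : Nonempty (Fin N) := by
    by_contra h
    rw [not_nonempty_iff] at h
    rw [Finset.sum_of_isEmpty] at hps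
    norm_num at hps
  -- μ bounds
  have hMle : ∀ j k, ‖(inner ℂ (Φ j) (Ψ k) : ℂ)‖ ≤ μ := by
    intro j k
    rw [hμ]
    calc ‖(inner ℂ (Φ j) (Ψ k) : ℂ)‖ ≤ ⨆ k, ‖(inner ℂ (Φ j) (Ψ k) : ℂ)‖ :=
          le_ciSup (f := fun k => ‖(inner ℂ (Φ j) (Ψ k) : ℂ)‖)
            (Set.Finite.bddAbove (Set.finite_range _)) k
      _ ≤ ⨆ j, ⨆ k, ‖(inner ℂ (Φ j) (Ψ k) : ℂ)‖ :=
          le_ciSup (f := fun j => ⨆ k, ‖(inner ℂ (Φ j) (Ψ k) : ℂ)‖)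
            (Set.Finite.bddAbove (Set.finite_range _)) j
  have hμ0 : 0 < μ := by
    obtain ⟨k0⟩ := hN
    have h1 : ∑ j, ‖(inner ℂ (Ψ k0) (Φ j) : ℂ)‖ ^ 2 = 1 := by
      rw [mu_sum_sq Φ (Ψ k0), Ψ.orthonormal.1 k0]; norm_num
    have h2 : ∃ j, (inner ℂ (Ψ k0) (Φ j) : ℂ) ≠ 0 := by
      by_contra h
      push_neg at h
      simp [h] at h1
    obtain ⟨j, hj⟩ := h2
    calc (0:ℝ) < ‖(inner ℂ (Φ j) (Ψ k0) : ℂ)‖ := by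
          rw [← norm_inner_symm]; simpa using hj
      _ ≤ μ := hMle j k0
  -- the function g
  set P : ℝ → ℝ := fun t => ∑ j, (p j) ^ ((1+t)⁻¹) with hP
  set Q : ℝ → ℝ := fun t => ∑ k, (q k) ^ ((1-t)⁻¹) with hQ
  set g : ℝ → ℝ := fun t => (1-t)/2 * Real.log (Q t) - t * Real.log μ - (1+t)/2 * Real.log (P t)
    with hg
  have hP0 : P 0 = 1 := by simp [hP, hps]
  have hQ0 : Q 0 = 1 := by simp [hQ, hqs]
  have hPpos : ∀ t : ℝ, -1 < t → 0 < P t := by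
    intro t ht
    obtain ⟨j0, hj0⟩ : ∃ j, 0 < p j := by
      by_contra h
      push_neg at h
      have : ∑ j, p j = 0 := Finset.sum_eq_zero fun j _ => le_antisymm (h j) (hp0 j)
      rw [hps] at this; norm_num at this
    have : 0 < (p j0) ^ ((1+t)⁻¹) := Real.rpow_pos_of_pos hj0 _
    refine lt_of_lt_of_le this ?_
    exact Finset.single_le_sum (fun j _ => Real.rpow_nonneg (hp0 j) _) (Finset.mem_univ j0)
  have hQpos : ∀ t : ℝ, t < 1 → 0 < Q t := by
    intro t ht
    obtain ⟨k0, hk0⟩ : ∃ k, 0 < q k := by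
      by_contra h
      push_neg at h
      have : ∑ k, q k = 0 := Finset.sum_eq_zero fun k _ => le_antisymm (h k) (hq0 k)
      rw [hqs] at this; norm_num at this
    have : 0 < (q k0) ^ ((1-t)⁻¹) := Real.rpow_pos_of_pos hk0 _
    refine lt_of_lt_of_le this ?_
    exact Finset.single_le_sum (fun k _ => Real.rpow_nonneg (hq0 k) _) (Finset.mem_univ k0)
  -- g ≤ 0 on (0,1)
  have hgle : ∀ t ∈ Ioo (0:ℝ) 1, g t ≤ 0 := by
    intro t ht
    have hkey := mu_key Φ Ψ hμ0 hMle x hx ht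
    have hQt : 0 < Q t := hQpos t ht.2
    have hPt : 0 < P t := hPpos t (by linarith [ht.1])
    have hL : Real.log ((Q t) ^ ((1-t)/2)) ≤ Real.log (μ ^ t * (P t) ^ ((1+t)/2)) := by
      apply Real.log_le_log (Real.rpow_pos_of_pos hQt _)
      exact hkey
    rw [Real.log_rpow hQt, Real.log_mul (by positivity) (by positivity),
      Real.log_rpow hPt, Real.log_rpow hμ0] at hL
    simp only [hg]
    linarith
  -- derivative of g at 0
  set S1 : ℝ := ∑ j, p j * Real.log (p j) with hS1
  set S2 : ℝ := ∑ k, q k * Real.log (q k) with hS2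
  have hinv1 : HasDerivAt (fun t : ℝ => (1+t)⁻¹) (-1) 0 := by
    have h1 : HasDerivAt (fun t : ℝ => 1+t) 1 0 := by
      simpa using (hasDerivAt_id (0:ℝ)).const_add 1
    have h2 := h1.inv (by norm_num)
    exact h2.congr_deriv (by norm_num)
  have hinv2 : HasDerivAt (fun t : ℝ => (1-t)⁻¹) 1 0 := by
    have h1 : HasDerivAt (fun t : ℝ => 1-t) (-1) 0 := by
      exact (hasDerivAt_id (0:ℝ)).const_sub 1
    have h2 := h1.inv (by norm_num)
    exact h2.congr_deriv (by norm_num)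
  have hdP : HasDerivAt P (∑ j, -(p j * Real.log (p j))) 0 := by
    refine HasDerivAt.fun_sum fun j _ => ?_
    rcases eq_or_lt_of_le (hp0 j) with h | h
    · have hev : (fun t : ℝ => (p j) ^ ((1+t)⁻¹)) =ᶠ[nhds (0:ℝ)] fun _ => 0 := by
        filter_upwards [Ioo_mem_nhds (by norm_num : (-1:ℝ) < 0) (by norm_num : (0:ℝ) < 1)]
          with t ht
        rw [← h, Real.zero_rpow]
        have h1t : 0 < 1 + t := by linarith [ht.1]
        positivity
      have : HasDerivAt (fun t : ℝ => (p j) ^ ((1+t)⁻¹)) 0 0 :=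
        (hasDerivAt_const (0:ℝ) (0:ℝ)).congr_of_eventuallyEq hev
      simpa [← h] using this
    · have hd := ((Real.hasStrictDerivAt_const_rpow h ((1+(0:ℝ))⁻¹)).hasDerivAt.comp 0 hinv1)
      exact hd.congr_deriv (by norm_num [Real.rpow_one])
  have hdQ : HasDerivAt Q (∑ k, q k * Real.log (q k)) 0 := by
    refine HasDerivAt.fun_sum fun k _ => ?_
    rcases eq_or_lt_of_le (hq0 k) with h | h
    · have hev : (fun t : ℝ => (q k) ^ ((1-t)⁻¹)) =ᶠ[nhds (0:ℝ)] fun _ => 0 := by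
        filter_upwards [Ioo_mem_nhds (by norm_num : (-1:ℝ) < 0) (by norm_num : (0:ℝ) < 1)]
          with t ht
        rw [← h, Real.zero_rpow]
        have : 0 < 1 - t := by linarith [ht.2]
        positivity
      have : HasDerivAt (fun t : ℝ => (q k) ^ ((1-t)⁻¹)) 0 0 :=
        (hasDerivAt_const (0:ℝ) (0:ℝ)).congr_of_eventuallyEq hev
      simpa [← h] using this
    · have hd := ((Real.hasStrictDerivAt_const_rpow h ((1-(0:ℝ))⁻¹)).hasDerivAt.comp 0 hinv2)
      exact hd.congr_deriv (by norm_num [Real.rpow_one])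
  have hPne : P 0 ≠ 0 := by rw [hP0]; norm_num
  have hQne : Q 0 ≠ 0 := by rw [hQ0]; norm_num
  have hlogP : HasDerivAt (fun t => Real.log (P t)) (-S1) 0 := by
    have := hdP.log hPne
    simpa [hP0, hS1, Finset.sum_neg_distrib] using this
  have hlogQ : HasDerivAt (fun t => Real.log (Q t)) S2 0 := by
    have := hdQ.log hQne
    simpa [hQ0, hS2] using this
  have hc1 : HasDerivAt (fun t : ℝ => (1+t)/2) (1/2 : ℝ) 0 := by
    simpa using ((hasDerivAt_id (0:ℝ)).const_add 1).div_const 2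
  have hc2 : HasDerivAt (fun t : ℝ => (1-t)/2) (-(1/2) : ℝ) 0 := by
    have h := ((hasDerivAt_id (0:ℝ)).neg.const_add 1).div_const 2
    have heq : (fun t : ℝ => (1-t)/2) = fun x : ℝ => (1 + -x)/2 := by funext t; ring
    rw [heq]
    exact h.congr_deriv (by norm_num)
  have hdg : HasDerivAt g (S2/2 - Real.log μ + S1/2) 0 := by
    have h1 := hc2.mul hlogQ
    have h2 : HasDerivAt (fun t : ℝ => t * Real.log μ) (Real.log μ) 0 := by
      simpa using (hasDerivAt_id (0:ℝ)).mul_const (Real.log μ)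
    have h3 := hc1.mul hlogP
    have := (h1.sub h2).sub h3
    refine this.congr_deriv ?_
    rw [hP0, hQ0]
    simp [Real.log_one]
    ring
  -- conclude
  have hg0 : g 0 = 0 := by simp [hg, hP0, hQ0]
  have hD : S2/2 - Real.log μ + S1/2 ≤ 0 := by
    have h1 : HasDerivWithinAt g (S2/2 - Real.log μ + S1/2) (Ioi (0:ℝ)) 0 :=
      hdg.hasDerivWithinAt
    rw [hasDerivWithinAt_iff_tendsto_slope] at h1
    have hsub : Ioi (0:ℝ) \ {0} = Ioi 0 := Set.diff_singleton_eq_self (by simp)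
    rw [hsub] at h1
    refine le_of_tendsto h1 ?_
    filter_upwards [Ioo_mem_nhdsGT_of_mem (Set.mem_Ico.mpr ⟨le_refl (0:ℝ), one_pos⟩)] with t ht
    rw [slope_def_field, hg0, sub_zero, sub_zero]
    exact div_nonpos_of_nonpos_of_nonneg (hgle t ht) (le_of_lt ht.1)
  have hgoal1 : (-∑ n, p n * Real.log (p n)) = -S1 := by rw [hS1]
  have hgoal2 : (-∑ n, q n * Real.log (q n)) = -S2 := by rw [hS2]
  show (-∑ n, p n * Real.log (p n)) + (-∑ n, q n * Real.log (q n)) ≥ -2 * Real.log μ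
  rw [hgoal1, hgoal2]
  linarith
end

section
/- Let P_T be the orthogonal projection onto functions supported in T ⊂ ℝ and P_F the projection onto functions whose Fourier transform is supported in F ⊂ ℝ, both of finite measure. If |T|·|F| < 1, then the operator norm of P_T P_F on L²(ℝ) is strictly less than 1. -/
open MeasureTheory FourierTransform

section GPauxSection
open Real Complex
open scoped RealInnerProductSpace NNReal ENNReal

namespace GPaux

lemma ofReal_norm_eq_coe_nnnorm {E : Type*} [SeminormedAddGroup E] (a : E) :
    ENNReal.ofReal ‖a‖ = (‖a‖₊ : ℝ≥0∞) := ENNReal.ofReal_eq_coe_nnreal _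

lemma gaussFT {ε : ℝ} (hε : 0 < ε) :
    𝓕 (fun ξ : ℝ => (Real.exp (-(π * ε * ξ^2)) : ℂ)) =
      fun t : ℝ => ((Real.sqrt ε)⁻¹ * Real.exp (-(π * t^2) / ε) : ℂ) := by
  have h := fourier_gaussian_pi (b := (ε:ℂ)) (by simpa using hε)
  have h1 : (fun ξ : ℝ => (Real.exp (-(π * ε * ξ^2)) : ℂ))
      = fun x : ℝ => Complex.exp (-(π:ℂ) * ε * (x:ℂ)^2) := by
    funext x
    rw [Complex.ofReal_exp]
    push_cast
    ring_nf
  rw [h1, h]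
  funext t
  have h2 : ((ε:ℂ) ^ (1/2 : ℂ)) = ((Real.sqrt ε : ℝ) : ℂ) := by
    rw [Real.sqrt_eq_rpow, Complex.ofReal_cpow hε.le]
    norm_num
  rw [h2, Complex.ofReal_exp]
  push_cast
  rw [one_div]
  congr 1
  have hε' : (ε:ℂ) ≠ 0 := by exact_mod_cast hε.ne'
  field_simp

lemma G_nonneg {ε : ℝ} (u : ℝ) : 0 ≤ (Real.sqrt ε)⁻¹ * Real.exp (-(π * u^2) / ε) :=
  mul_nonneg (inv_nonneg.2 (Real.sqrt_nonneg _)) (Real.exp_nonneg _)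

lemma G_integrable {ε : ℝ} (hε : 0 < ε) :
    Integrable (fun u : ℝ => (Real.sqrt ε)⁻¹ * Real.exp (-(π * u^2) / ε)) := by
  have : ∀ u : ℝ, -(π * u^2) / ε = -(π/ε) * u^2 := by intro u; field_simp
  simp_rw [this]
  exact (integrable_exp_neg_mul_sq (div_pos Real.pi_pos hε)).const_mul _

lemma G_integral {ε : ℝ} (hε : 0 < ε) :
    ∫ u : ℝ, (Real.sqrt ε)⁻¹ * Real.exp (-(π * u^2) / ε) = 1 := by
  have h : ∀ u : ℝ, -(π * u^2) / ε = -(π/ε) * u^2 := by intro u; field_simp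
  simp_rw [h, integral_const_mul, integral_gaussian]
  have : π / (π / ε) = ε := by field_simp
  rw [this, inv_mul_cancel₀ (Real.sqrt_ne_zero'.2 hε)]

lemma phi_integrable {ε : ℝ} (hε : 0 < ε) :
    Integrable (fun ξ : ℝ => Real.exp (-(π * ε * ξ^2))) := by
  have : ∀ u : ℝ, -(π * ε * u^2) = -(π*ε) * u^2 := by intro u; ring
  simp_rw [this]
  exact integrable_exp_neg_mul_sq (mul_pos Real.pi_pos hε)


lemma conj_fourier {f : ℝ → ℂ} (ξ : ℝ) :
    (starRingEnd ℂ) (𝓕 f ξ) = ∫ y : ℝ, Complex.exp (↑(2 * π * y * ξ) * Complex.I) * (starRingEnd ℂ) (f y) := by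
  rw [Real.fourier_real_eq_integral_exp_smul, ← integral_conj]
  congr 1; funext y
  rw [smul_eq_mul, map_mul, ← Complex.exp_conj]
  congr 2
  simp only [map_mul, Complex.conj_I, Complex.conj_ofReal]
  push_cast
  ring

lemma kernel_formula {f : ℝ → ℂ} (hf : Integrable f) {ε : ℝ} (hε : 0 < ε) (x : ℝ) :
    𝓕 (fun ξ : ℝ => (starRingEnd ℂ) (𝓕 f ξ) * (Real.exp (-(π * ε * ξ^2)) : ℂ)) x
      = ∫ y : ℝ, (starRingEnd ℂ) (f y) *
          ((Real.sqrt ε)⁻¹ * Real.exp (-(π * (x-y)^2) / ε) : ℂ) := by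
  set F : ℝ → ℝ → ℂ := fun ξ y =>
    (Complex.exp (↑(-2 * π * ξ * x) * Complex.I) * Complex.exp (↑(2 * π * y * ξ) * Complex.I)
      * (Real.exp (-(π * ε * ξ^2)) : ℂ)) * (starRingEnd ℂ) (f y) with hF
  have step1 : 𝓕 (fun ξ : ℝ => (starRingEnd ℂ) (𝓕 f ξ) * (Real.exp (-(π * ε * ξ^2)) : ℂ)) x
      = ∫ ξ : ℝ, ∫ y : ℝ, F ξ y := by
    rw [Real.fourier_real_eq_integral_exp_smul]
    congr 1; funext ξ
    rw [smul_eq_mul, conj_fourier, ← integral_mul_const, ← integral_const_mul]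
    congr 1; funext y
    simp only [hF]; ring
  rw [step1]
  have hswap : Integrable (Function.uncurry F) (volume.prod volume) := by
    have hcont : Continuous fun p : ℝ × ℝ =>
        Complex.exp (↑(-2 * π * p.1 * x) * Complex.I) * Complex.exp (↑(2 * π * p.2 * p.1) * Complex.I)
          * (Real.exp (-(π * ε * p.1^2)) : ℂ) := by fun_prop
    have hmeas : AEStronglyMeasurable (Function.uncurry F) (volume.prod volume) := by
      exact hcont.aestronglyMeasurable.mul
        ((Complex.continuous_conj.comp_aestronglyMeasurable hf.1).comp_snd)
    have hbound : Integrable (fun p : ℝ × ℝ => Real.exp (-(π * ε * p.1^2)) * ‖f p.2‖)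
        (volume.prod volume) := by
      have h1 : Integrable (fun ξ : ℝ => Real.exp (-(π * ε * ξ^2))) := by
        have : ∀ u : ℝ, -(π * ε * u^2) = -(π*ε) * u^2 := by intro u; ring
        simp_rw [this]
        exact integrable_exp_neg_mul_sq (mul_pos Real.pi_pos hε)
      exact h1.mul_prod hf.norm
    refine hbound.mono' hmeas ?_
    filter_upwards with p
    simp only [Function.uncurry, hF, norm_mul]
    rw [Complex.norm_exp_ofReal_mul_I, Complex.norm_exp_ofReal_mul_I, one_mul, one_mul,
      Complex.norm_real, Real.norm_eq_abs, _root_.abs_of_nonneg (Real.exp_nonneg _),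
      RCLike.norm_conj]
  rw [integral_integral_swap hswap]
  congr 1; funext y
  have inner_eq : ∫ ξ : ℝ, F ξ y
      = (starRingEnd ℂ) (f y) * 𝓕 (fun ξ : ℝ => (Real.exp (-(π * ε * ξ^2)) : ℂ)) (x - y) := by
    rw [Real.fourier_real_eq_integral_exp_smul, ← integral_const_mul]
    congr 1; funext ξ
    simp only [smul_eq_mul, hF]
    rw [show Complex.exp (↑(-2 * π * ξ * x) * Complex.I) * Complex.exp (↑(2 * π * y * ξ) * Complex.I)
        = Complex.exp (↑(-2 * π * ξ * (x - y)) * Complex.I) by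
      rw [← Complex.exp_add]; congr 1; push_cast; ring]
    ring
  rw [inner_eq]
  simp only [gaussFT hε]



lemma norm_fourier_le {f : ℝ → ℂ} (ξ : ℝ) : ‖𝓕 f ξ‖ ≤ ∫ y : ℝ, ‖f y‖ :=
  VectorFourier.norm_fourierIntegral_le_integral_norm _ _ _ _ _

lemma enorm_fourierInv_le {f : ℝ → ℂ} (x : ℝ) :
    (‖𝓕⁻ f x‖₊ : ENNReal) ≤ ∫⁻ y : ℝ, (‖f y‖₊ : ENNReal) := by
  rw [Real.fourierInv_eq]
  calc (‖∫ v : ℝ, 𝐞 ⟪v, x⟫ • f v‖₊ : ENNReal)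
      = ENNReal.ofReal ‖∫ v : ℝ, 𝐞 ⟪v, x⟫ • f v‖ := (ofReal_norm_eq_coe_nnnorm _).symm
    _ ≤ ENNReal.ofReal (∫⁻ v : ℝ, ENNReal.ofReal ‖𝐞 ⟪v, x⟫ • f v‖).toReal :=
        ENNReal.ofReal_le_ofReal (norm_integral_le_lintegral_norm _)
    _ ≤ ∫⁻ v : ℝ, ENNReal.ofReal ‖𝐞 ⟪v, x⟫ • f v‖ := ENNReal.ofReal_toReal_le
    _ = ∫⁻ y : ℝ, (‖f y‖₊ : ENNReal) := by
        congr 1; funext v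
        rw [Circle.norm_smul, ofReal_norm_eq_coe_nnnorm]

lemma two_mul_le_sq_add {p q : ℝ≥0} :
    2 * ((p : ℝ≥0∞) * (q : ℝ≥0∞)) ≤ (p : ℝ≥0∞)^2 + (q : ℝ≥0∞)^2 := by
  have h : (2 : ℝ≥0∞) = ((2 : ℝ≥0) : ℝ≥0∞) := by norm_cast
  rw [h, ← ENNReal.coe_mul, ← ENNReal.coe_mul, ← ENNReal.coe_pow, ← ENNReal.coe_pow,
    ← ENNReal.coe_add, ENNReal.coe_le_coe, ← NNReal.coe_le_coe]
  push_cast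
  nlinarith [sq_nonneg ((p : ℝ) - (q : ℝ))]

lemma keyA {f : ℝ → ℂ} (hf : Integrable f) {ε : ℝ} (hε : 0 < ε) :
    ∫⁻ ξ : ℝ, (‖𝓕 f ξ‖₊ : ℝ≥0∞)^2 * ENNReal.ofReal (Real.exp (-(π * ε * ξ^2)))
      ≤ ∫⁻ x : ℝ, (‖f x‖₊ : ℝ≥0∞)^2 := by
  set A : ℝ := ∫ y : ℝ, ‖f y‖ with hA
  have hFc : Continuous (𝓕 f) :=
    VectorFourier.fourierIntegral_continuous Real.continuous_fourierChar
      (by exact continuous_fst.inner continuous_snd) hf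
  set φ : ℝ → ℝ := fun ξ => Real.exp (-(π * ε * ξ^2)) with hφ
  have hφ_int : Integrable φ := by
    have : ∀ u : ℝ, -(π * ε * u^2) = -(π*ε) * u^2 := by intro u; ring
    simp_rw [hφ, this]
    exact integrable_exp_neg_mul_sq (mul_pos Real.pi_pos hε)
  have hφ_nn : ∀ ξ, 0 ≤ φ ξ := fun ξ => Real.exp_nonneg _
  set ψ : ℝ → ℂ := fun ξ => (starRingEnd ℂ) (𝓕 f ξ) * (φ ξ : ℂ) with hψ
  have hψ_int : Integrable ψ := by
    refine (hφ_int.ofReal).bdd_mul (c := A) ?_ (Filter.Eventually.of_forall fun ξ => ?_)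
    · exact (Complex.continuous_conj.comp hFc).aestronglyMeasurable
    · rw [RCLike.norm_conj]; exact norm_fourier_le ξ
  -- the real integral I
  set I : ℝ := ∫ ξ : ℝ, ‖𝓕 f ξ‖^2 * φ ξ with hI
  have hI_int : Integrable (fun ξ : ℝ => ‖𝓕 f ξ‖^2 * φ ξ) := by
    refine (hφ_int.const_mul (A^2)).mono'
      (((hFc.norm.pow 2).mul (by fun_prop : Continuous φ)).aestronglyMeasurable) ?_
    filter_upwards with ξ
    rw [Real.norm_eq_abs, _root_.abs_of_nonneg (mul_nonneg (sq_nonneg _) (hφ_nn ξ))]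
    have h1 : ‖𝓕 f ξ‖ ≤ A := norm_fourier_le ξ
    have h2 : (0:ℝ) ≤ ‖𝓕 f ξ‖ := norm_nonneg _
    exact mul_le_mul_of_nonneg_right (pow_le_pow_left₀ h2 h1 2) (hφ_nn ξ)
  have hLHS : ∫⁻ ξ : ℝ, (‖𝓕 f ξ‖₊ : ℝ≥0∞)^2 * ENNReal.ofReal (φ ξ) = ENNReal.ofReal I := by
    rw [hI, ofReal_integral_eq_lintegral_ofReal hI_int
      (Filter.Eventually.of_forall fun ξ => mul_nonneg (sq_nonneg _) (hφ_nn ξ))]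
    congr 1; funext ξ
    rw [ENNReal.ofReal_mul (sq_nonneg _), ENNReal.ofReal_pow (norm_nonneg _),
      ofReal_norm_eq_coe_nnnorm]
  -- I as the real part of a complex integral
  have hprod : ∀ ξ : ℝ, 𝓕 f ξ • ψ ξ = ((‖𝓕 f ξ‖^2 * φ ξ : ℝ) : ℂ) := by
    intro ξ
    rw [smul_eq_mul, hψ, ← mul_assoc, Complex.mul_conj, Complex.normSq_eq_norm_sq]
    push_cast
    rfl
  have hIre : I = (∫ ξ : ℝ, 𝓕 f ξ • ψ ξ).re := by
    simp_rw [hprod]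
    rw [show (∫ ξ : ℝ, ((‖𝓕 f ξ‖^2 * φ ξ : ℝ) : ℂ)) = ((∫ ξ : ℝ, ‖𝓕 f ξ‖^2 * φ ξ : ℝ) : ℂ)
      from integral_ofReal, Complex.ofReal_re, hI]
  -- multiplication formula
  have hflip : (innerₗ ℝ).flip = innerₗ ℝ := by
    apply LinearMap.ext; intro x; apply LinearMap.ext; intro y
    exact real_inner_comm x y
  have hmul : ∫ ξ : ℝ, 𝓕 f ξ • ψ ξ = ∫ x : ℝ, f x • 𝓕 ψ x := by
    have := VectorFourier.integral_fourierIntegral_smul_eq_flip (e := 𝐞)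
      (L := innerₗ ℝ) (μ := volume) (ν := volume) Real.continuous_fourierChar
      (by exact continuous_fst.inner continuous_snd) hf hψ_int
    rw [hflip] at this
    exact this
  -- kernel bound
  set G : ℝ → ℝ := fun u => (Real.sqrt ε)⁻¹ * Real.exp (-(π * u^2) / ε) with hG
  have hG_nn : ∀ u, 0 ≤ G u := fun u => G_nonneg u
  have hGint : Integrable G := G_integrable hε
  have hker : ∀ x : ℝ, (‖𝓕 ψ x‖₊ : ℝ≥0∞)
      ≤ ∫⁻ y : ℝ, (‖f y‖₊ : ℝ≥0∞) * ENNReal.ofReal (G (x - y)) := by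
    intro x
    rw [hψ]
    rw [show (fun ξ : ℝ => (starRingEnd ℂ) (𝓕 f ξ) * (φ ξ : ℂ)) = fun ξ : ℝ =>
      (starRingEnd ℂ) (𝓕 f ξ) * ((Real.exp (-(π * ε * ξ^2)) : ℝ) : ℂ) from rfl]
    rw [kernel_formula hf hε x]
    calc (‖∫ y : ℝ, (starRingEnd ℂ) (f y) * ((Real.sqrt ε)⁻¹ * Real.exp (-(π * (x-y)^2) / ε) : ℂ)‖₊ : ℝ≥0∞)
        = ENNReal.ofReal ‖∫ y : ℝ, (starRingEnd ℂ) (f y) * ((Real.sqrt ε)⁻¹ * Real.exp (-(π * (x-y)^2) / ε) : ℂ)‖ :=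
          (ofReal_norm_eq_coe_nnnorm _).symm
      _ ≤ ENNReal.ofReal (∫⁻ y : ℝ, ENNReal.ofReal
            ‖(starRingEnd ℂ) (f y) * ((Real.sqrt ε)⁻¹ * Real.exp (-(π * (x-y)^2) / ε) : ℂ)‖).toReal :=
          ENNReal.ofReal_le_ofReal (norm_integral_le_lintegral_norm _)
      _ ≤ ∫⁻ y : ℝ, ENNReal.ofReal
            ‖(starRingEnd ℂ) (f y) * ((Real.sqrt ε)⁻¹ * Real.exp (-(π * (x-y)^2) / ε) : ℂ)‖ :=
          ENNReal.ofReal_toReal_le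
      _ = ∫⁻ y : ℝ, (‖f y‖₊ : ℝ≥0∞) * ENNReal.ofReal (G (x - y)) := by
          congr 1; funext y
          rw [norm_mul, RCLike.norm_conj, ENNReal.ofReal_mul (norm_nonneg _),
            ofReal_norm_eq_coe_nnnorm]
          congr 1
          rw [← Complex.ofReal_mul, Complex.norm_real, Real.norm_eq_abs,
            _root_.abs_of_nonneg (hG_nn (x - y))]
  -- Schur test setup
  set a : ℝ → ℝ≥0∞ := fun x => (‖f x‖₊ : ℝ≥0∞) with ha
  have ha_meas : AEMeasurable a volume := hf.1.enorm
  set g : ℝ → ℝ → ℝ≥0∞ := fun x y => ENNReal.ofReal (G (x - y)) with hg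
  have hGc : Continuous G := by
    rw [hG]; fun_prop
  have hgx : ∀ x : ℝ, Measurable (g x) := by
    intro x
    exact ENNReal.measurable_ofReal.comp (hGc.measurable.comp (measurable_const.sub measurable_id))
  have hg_meas : Measurable (fun p : ℝ × ℝ => g p.1 p.2) :=
    ENNReal.measurable_ofReal.comp (hGc.measurable.comp (measurable_fst.sub measurable_snd))
  set K : ℝ → ℝ≥0∞ := fun u => ENNReal.ofReal (G u) with hK
  have hGofReal : ∫⁻ u : ℝ, K u = 1 := by
    rw [← ofReal_integral_eq_lintegral_ofReal hGint
      (Filter.Eventually.of_forall fun u => hG_nn u), G_integral hε, ENNReal.ofReal_one]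
  have hG1 : ∀ x : ℝ, (∫⁻ y : ℝ, g x y) = 1 := by
    intro x
    have heven : ∀ y : ℝ, g x y = K (y - x) := by
      intro y
      simp only [hg, hG, hK]
      congr 3
      ring
    calc (∫⁻ y : ℝ, g x y) = ∫⁻ y : ℝ, K (y - x) := by simp_rw [heven]
      _ = ∫⁻ u : ℝ, K u := lintegral_sub_right_eq_self K x
      _ = 1 := hGofReal
  have hG1' : ∀ y : ℝ, (∫⁻ x : ℝ, g x y) = 1 := by
    intro y
    calc (∫⁻ x : ℝ, g x y) = ∫⁻ x : ℝ, K (x - y) := rfl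
      _ = ∫⁻ u : ℝ, K u := lintegral_sub_right_eq_self K y
      _ = 1 := hGofReal
  have ha_fin : ∀ x, a x ≠ ⊤ := fun x => ENNReal.coe_ne_top
  have ha2_fin : ∀ x, a x ^ 2 ≠ ⊤ := fun x => ENNReal.pow_ne_top (ha_fin x)
  have schur : (∫⁻ x : ℝ, a x * ∫⁻ y : ℝ, a y * g x y) ≤ ∫⁻ x : ℝ, a x ^ 2 := by
    have key2 : (2:ℝ≥0∞) * (∫⁻ x : ℝ, a x * ∫⁻ y : ℝ, a y * g x y)
        ≤ 2 * ∫⁻ x : ℝ, a x ^ 2 := by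
      calc (2:ℝ≥0∞) * (∫⁻ x : ℝ, a x * ∫⁻ y : ℝ, a y * g x y)
          = ∫⁻ x : ℝ, ∫⁻ y : ℝ, 2 * (a x * a y) * g x y := by
            rw [← lintegral_const_mul' 2 _ (by norm_num)]
            congr 1; funext x
            rw [← lintegral_const_mul' (a x) _ (ha_fin x),
              ← lintegral_const_mul' 2 _ (by norm_num)]
            congr 1; funext y; ring
        _ ≤ ∫⁻ x : ℝ, ∫⁻ y : ℝ, (a x ^ 2 + a y ^ 2) * g x y := by
            refine lintegral_mono fun x => lintegral_mono fun y => ?_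
            exact mul_le_mul_left two_mul_le_sq_add _
        _ = ∫⁻ x : ℝ, ((∫⁻ y : ℝ, a x ^ 2 * g x y) + ∫⁻ y : ℝ, a y ^ 2 * g x y) := by
            congr 1; funext x
            simp_rw [add_mul]
            exact lintegral_add_left' (((hgx x).const_mul _).aemeasurable) _
        _ = ∫⁻ x : ℝ, (a x ^ 2 + ∫⁻ y : ℝ, a y ^ 2 * g x y) := by
            congr 1; funext x
            rw [lintegral_const_mul' _ _ (ha2_fin x), hG1 x, mul_one]
        _ = (∫⁻ x : ℝ, a x ^ 2) + ∫⁻ x : ℝ, ∫⁻ y : ℝ, a y ^ 2 * g x y := by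
            refine lintegral_add_left' ?_ _
            exact ha_meas.pow_const 2
        _ = (∫⁻ x : ℝ, a x ^ 2) + ∫⁻ y : ℝ, ∫⁻ x : ℝ, a y ^ 2 * g x y := by
            congr 1
            refine lintegral_lintegral_swap ?_
            exact ((ha_meas.comp_quasiMeasurePreserving
              MeasureTheory.Measure.quasiMeasurePreserving_snd).pow_const 2).mul
              hg_meas.aemeasurable
        _ = (∫⁻ x : ℝ, a x ^ 2) + ∫⁻ y : ℝ, a y ^ 2 := by
            congr 1
            refine lintegral_congr fun y => ?_
            rw [lintegral_const_mul' _ _ (ha2_fin y), hG1' y, mul_one]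
        _ = 2 * ∫⁻ x : ℝ, a x ^ 2 := by ring
    exact (ENNReal.mul_le_mul_iff_right (by norm_num) (by norm_num)).mp key2
  -- assemble
  have h1 : I ≤ (∫⁻ x : ℝ, ENNReal.ofReal ‖f x • 𝓕 ψ x‖).toReal := by
    rw [hIre, hmul]
    refine le_trans (Complex.re_le_norm _) ?_
    exact norm_integral_le_lintegral_norm _
  have hmain : ENNReal.ofReal I ≤ ∫⁻ x : ℝ, a x ^ 2 := by
    refine le_trans ?_ schur
    calc ENNReal.ofReal I
        ≤ ENNReal.ofReal ((∫⁻ x : ℝ, ENNReal.ofReal ‖f x • 𝓕 ψ x‖).toReal) :=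
          ENNReal.ofReal_le_ofReal h1
      _ ≤ ∫⁻ x : ℝ, ENNReal.ofReal ‖f x • 𝓕 ψ x‖ := ENNReal.ofReal_toReal_le
      _ = ∫⁻ x : ℝ, a x * (‖𝓕 ψ x‖₊ : ℝ≥0∞) := by
          congr 1; funext x
          rw [norm_smul, ENNReal.ofReal_mul (norm_nonneg _), ofReal_norm_eq_coe_nnnorm,
            ofReal_norm_eq_coe_nnnorm]
      _ ≤ ∫⁻ x : ℝ, a x * ∫⁻ y : ℝ, a y * g x y :=
          lintegral_mono fun x => mul_le_mul_right (hker x) _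
  rw [hLHS]
  exact hmain


lemma plancherel_ineq {f : ℝ → ℂ} (hf : Integrable f) :
    ∫⁻ ξ : ℝ, (‖𝓕 f ξ‖₊ : ℝ≥0∞)^2 ≤ ∫⁻ x : ℝ, (‖f x‖₊ : ℝ≥0∞)^2 := by
  have hFc : Continuous (𝓕 f) :=
    VectorFourier.fourierIntegral_continuous Real.continuous_fourierChar
      (by exact continuous_fst.inner continuous_snd) hf
  set b : ℝ → ℝ≥0∞ := fun ξ => (‖𝓕 f ξ‖₊ : ℝ≥0∞)^2 with hb
  set w : ℕ → ℝ → ℝ≥0∞ := fun n ξ =>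
    b ξ * ENNReal.ofReal (Real.exp (-(π * (1/(n+1)) * ξ^2))) with hw
  have hkey : ∀ n : ℕ, (∫⁻ ξ : ℝ, w n ξ) ≤ ∫⁻ x : ℝ, (‖f x‖₊ : ℝ≥0∞)^2 := by
    intro n
    exact keyA hf (by positivity)
  have hmeas : ∀ n : ℕ, Measurable (w n) := by
    intro n
    show Measurable fun ξ => b ξ * ENNReal.ofReal (Real.exp (-(π * (1/((n:ℝ)+1)) * ξ^2)))
    refine Measurable.fun_mul ?_ ?_
    · exact ((hFc.nnnorm.measurable).coe_nnreal_ennreal).pow_const 2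
    · exact ENNReal.measurable_ofReal.comp (by fun_prop)
  have htend : ∀ ξ : ℝ, Filter.Tendsto (fun n : ℕ => w n ξ) Filter.atTop (nhds (b ξ)) := by
    intro ξ
    have h1 : Filter.Tendsto (fun n : ℕ => Real.exp (-(π * (1/(n+1)) * ξ^2)))
        Filter.atTop (nhds 1) := by
      have h2 : Filter.Tendsto (fun n : ℕ => -(π * (1/(n+1 : ℝ)) * ξ^2))
          Filter.atTop (nhds 0) := by
        have h3 : Filter.Tendsto (fun n : ℕ => 1/(n+1 : ℝ)) Filter.atTop (nhds 0) :=
          tendsto_one_div_add_atTop_nhds_zero_nat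
        have h4 := ((h3.const_mul π).mul_const (ξ^2)).neg
        simpa using h4
      simpa [Function.comp_def] using (Real.continuous_exp.tendsto 0).comp h2
    have h5 : Filter.Tendsto (fun n : ℕ => ENNReal.ofReal (Real.exp (-(π * (1/(n+1)) * ξ^2))))
        Filter.atTop (nhds 1) := by
      have := (ENNReal.continuous_ofReal.tendsto 1).comp h1
      simpa [Function.comp_def] using this
    have h6 := ENNReal.Tendsto.const_mul (a := b ξ) h5 (Or.inl one_ne_zero)
    simpa [hw, one_div] using h6
  have hliminf : ∀ ξ : ℝ, b ξ = Filter.liminf (fun n : ℕ => w n ξ) Filter.atTop :=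
    fun ξ => ((htend ξ).liminf_eq).symm
  calc ∫⁻ ξ : ℝ, b ξ = ∫⁻ ξ : ℝ, Filter.liminf (fun n : ℕ => w n ξ) Filter.atTop := by
        simp_rw [← hliminf]
    _ ≤ Filter.liminf (fun n : ℕ => ∫⁻ ξ : ℝ, w n ξ) Filter.atTop :=
        lintegral_liminf_le hmeas
    _ ≤ ∫⁻ x : ℝ, (‖f x‖₊ : ℝ≥0∞)^2 := by
        refine Filter.liminf_le_of_le (by isBoundedDefault) ?_
        intro c hc
        rcases (hc.and (Filter.Eventually.of_forall hkey)).exists with ⟨n, hn1, hn2⟩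
        exact hn1.trans hn2

lemma fourier_of_not_integrable {f : ℝ → ℂ} (hf : ¬ Integrable f) : 𝓕 f = fun _ => (0:ℂ) := by
  funext w
  rw [Real.fourier_eq, integral_undef]
  intro h
  exact hf ((Real.fourierIntegral_convergent_iff w).mp h)

end GPaux

end GPauxSection

open GPaux in
open scoped NNReal ENNReal in
theorem gerchberg_papoulis_contraction
    (T F : Set ℝ) (hT : MeasurableSet T) (hF : MeasurableSet F)
    (hTfin : volume T < ⊤) (hFfin : volume F < ⊤)
    (hTF : volume T * volume F < 1) :
    ∃ c : ℝ, 0 ≤ c ∧ c < 1 ∧ ∀ f : ℝ → ℂ, MemLp f 2 volume →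
      eLpNorm (T.indicator (𝓕⁻ (F.indicator (𝓕 f)))) 2 volume ≤
        ENNReal.ofReal c * eLpNorm f 2 volume := by
  have hne : volume T * volume F ≠ ⊤ := (hTF.trans ENNReal.one_lt_top).ne
  refine ⟨((volume T * volume F).toReal) ^ (1/2 : ℝ),
    Real.rpow_nonneg ENNReal.toReal_nonneg _, ?_, ?_⟩
  · have h0 : (volume T * volume F).toReal < 1 := by
      rw [show (1:ℝ) = (1:ℝ≥0∞).toReal from ENNReal.toReal_one.symm]
      exact (ENNReal.toReal_lt_toReal hne ENNReal.one_ne_top).mpr hTF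
    exact Real.rpow_lt_one ENNReal.toReal_nonneg h0 (by norm_num)
  · intro f hfm
    by_cases hfi : Integrable f volume
    · set g : ℝ → ℂ := F.indicator (𝓕 f) with hg
      set B : ℝ≥0∞ := ∫⁻ ξ : ℝ, (‖g ξ‖₊ : ℝ≥0∞) with hB
      have hFc : Continuous (𝓕 f) :=
        VectorFourier.fourierIntegral_continuous Real.continuous_fourierChar
          (by exact continuous_fst.inner continuous_snd) hfi
      have step1 : eLpNorm (T.indicator (𝓕⁻ g)) 2 volume ≤ (volume T) ^ (1/2:ℝ) * B := by
        rw [eLpNorm_eq_lintegral_rpow_enorm_toReal (by norm_num) (by norm_num)]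
        have hpt : ∀ x : ℝ, (‖T.indicator (𝓕⁻ g) x‖₊ : ℝ≥0∞) ^ (ENNReal.toReal 2)
            ≤ T.indicator (fun _ => B ^ (2:ℝ)) x := by
          intro x
          rw [show ENNReal.toReal 2 = (2:ℝ) by norm_num]
          by_cases hx : x ∈ T
          · rw [Set.indicator_of_mem hx, Set.indicator_of_mem hx]
            exact ENNReal.rpow_le_rpow (enorm_fourierInv_le x) (by norm_num)
          · rw [Set.indicator_of_notMem hx, Set.indicator_of_notMem hx]
            simp [ENNReal.zero_rpow_of_pos]
        calc (∫⁻ x : ℝ, (‖T.indicator (𝓕⁻ g) x‖₊ : ℝ≥0∞) ^ ENNReal.toReal 2)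
              ^ (1 / ENNReal.toReal 2)
            ≤ (∫⁻ x : ℝ, T.indicator (fun _ => B ^ (2:ℝ)) x) ^ (1 / ENNReal.toReal 2) :=
              ENNReal.rpow_le_rpow (lintegral_mono hpt) (by norm_num)
          _ = (B ^ (2:ℝ) * volume T) ^ (1 / ENNReal.toReal 2) := by
              rw [lintegral_indicator hT, setLIntegral_const]
          _ = (volume T) ^ (1/2:ℝ) * B := by
              rw [show (1 / ENNReal.toReal 2) = (1/2:ℝ) by norm_num,
                ENNReal.mul_rpow_of_nonneg _ _ (by norm_num : (0:ℝ) ≤ 1/2),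
                ← ENNReal.rpow_mul]
              norm_num [mul_comm]
      have step2 : B ≤ (volume F) ^ (1/2:ℝ) * eLpNorm f 2 volume := by
        have hBeq : B = ∫⁻ ξ : ℝ,
            (F.indicator (fun _ => (1:ℝ≥0∞)) ξ) * (‖𝓕 f ξ‖₊ : ℝ≥0∞) := by
          rw [hB]; congr 1; funext ξ
          by_cases hx : ξ ∈ F <;>
            simp [hg, Set.indicator_of_mem, Set.indicator_of_notMem, hx]
        have hcs := ENNReal.lintegral_mul_le_Lp_mul_Lq volume (p := 2) (q := 2)
          Real.HolderConjugate.two_two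
          (f := F.indicator (fun _ => (1:ℝ≥0∞))) (g := fun ξ => (‖𝓕 f ξ‖₊ : ℝ≥0∞))
          ((measurable_const.indicator hF).aemeasurable)
          (hFc.measurable.nnnorm.coe_nnreal_ennreal.aemeasurable)
        have hind : (∫⁻ ξ : ℝ, (F.indicator (fun _ => (1:ℝ≥0∞)) ξ) ^ (2:ℝ)) = volume F := by
          have hh : ∀ ξ : ℝ, (F.indicator (fun _ => (1:ℝ≥0∞)) ξ) ^ (2:ℝ)
              = F.indicator (fun _ => (1:ℝ≥0∞)) ξ := by
            intro ξ
            by_cases hx : ξ ∈ F <;>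
              simp [Set.indicator_of_mem, Set.indicator_of_notMem, hx,
                ENNReal.zero_rpow_of_pos]
          simp_rw [hh]
          rw [lintegral_indicator hF, setLIntegral_const, one_mul]
        have hrpow2 : ∀ z : ℝ≥0∞, z ^ (2:ℝ) = z ^ (2:ℕ) := by
          intro z; rw [← ENNReal.rpow_natCast]; norm_num
        have hplan : (∫⁻ ξ : ℝ, ((‖𝓕 f ξ‖₊ : ℝ≥0∞)) ^ (2:ℝ))
            ≤ ∫⁻ x : ℝ, ((‖f x‖₊ : ℝ≥0∞)) ^ (2:ℝ) := by
          simp_rw [hrpow2]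
          exact plancherel_ineq hfi
        have heLp : eLpNorm f 2 volume
            = (∫⁻ x : ℝ, ((‖f x‖₊ : ℝ≥0∞)) ^ (2:ℝ)) ^ (1/2:ℝ) := by
          rw [eLpNorm_eq_lintegral_rpow_enorm_toReal (by norm_num) (by norm_num)]
          norm_num
          rfl
        calc B ≤ (∫⁻ ξ : ℝ, (F.indicator (fun _ => (1:ℝ≥0∞)) ξ) ^ (2:ℝ)) ^ (1/(2:ℝ))
              * (∫⁻ ξ : ℝ, ((‖𝓕 f ξ‖₊ : ℝ≥0∞)) ^ (2:ℝ)) ^ (1/(2:ℝ)) := by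
              rw [hBeq]; exact hcs
          _ ≤ (volume F) ^ (1/2:ℝ) * eLpNorm f 2 volume := by
              rw [hind, heLp]
              exact mul_le_mul_right (ENNReal.rpow_le_rpow hplan (by norm_num)) _
      calc eLpNorm (T.indicator (𝓕⁻ g)) 2 volume
          ≤ (volume T) ^ (1/2:ℝ) * B := step1
        _ ≤ (volume T) ^ (1/2:ℝ) * ((volume F) ^ (1/2:ℝ) * eLpNorm f 2 volume) :=
            mul_le_mul_right step2 _
        _ = ((volume T * volume F) ^ (1/2:ℝ)) * eLpNorm f 2 volume := by
            rw [ENNReal.mul_rpow_of_nonneg _ _ (by norm_num : (0:ℝ) ≤ 1/2), mul_assoc]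
        _ = ENNReal.ofReal ((volume T * volume F).toReal ^ (1/2:ℝ)) * eLpNorm f 2 volume := by
            rw [← ENNReal.ofReal_rpow_of_nonneg ENNReal.toReal_nonneg
              (by norm_num : (0:ℝ) ≤ 1/2), ENNReal.ofReal_toReal hne]
    · have h0 : 𝓕 f = fun _ => (0:ℂ) := fourier_of_not_integrable hfi
      rw [h0]
      have h1 : F.indicator (fun _ : ℝ => (0:ℂ)) = fun _ => (0:ℂ) := by funext x; simp
      rw [h1]
      have h2 : 𝓕⁻ (fun _ : ℝ => (0:ℂ)) = fun _ => (0:ℂ) := by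
        funext w; rw [Real.fourierInv_eq]; simp
      rw [h2]
      have h3 : T.indicator (fun _ : ℝ => (0:ℂ)) = fun _ => (0:ℂ) := by funext x; simp
      rw [h3]
      simpa [eLpNorm_zero'] using zero_le _
end

section
/- Let Φ, Ψ be orthonormal bases of ℂ^N with mutual coherence μ, and let T, F be index subsets with |T|·|F| < 1/μ². Then for every x ∈ ℂ^N with coefficient vectors α (in Φ) and β (in Ψ): ‖α‖_{ℓ²(T^c)} + ‖β‖_{ℓ²(F^c)} ≥ (1 + 1/(1 − μ√(|T||F|)))^{−1} ‖x‖₂. -/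
set_option maxHeartbeats 4000000

open scoped RealInnerProductSpace

noncomputable def gjRestr {N : ℕ} (S : Finset (Fin N)) (g : Fin N → ℂ) :
    EuclideanSpace ℂ (Fin N) := WithLp.toLp 2 (fun k => if k ∈ S then g k else 0)

lemma gjRestr_norm {N : ℕ} (S : Finset (Fin N)) (g : Fin N → ℂ) :
    ‖gjRestr S g‖ = Real.sqrt (∑ k ∈ S, ‖g k‖ ^ 2) := by
  rw [EuclideanSpace.norm_eq]
  congr 1
  have h : ∀ k, ‖gjRestr S g k‖ ^ 2 = if k ∈ S then ‖g k‖ ^ 2 else 0 := by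
    intro k
    by_cases h : k ∈ S <;> simp [gjRestr, h]
  simp_rw [h]
  rw [Finset.sum_ite_mem, Finset.univ_inter]


lemma gj_parseval {N : ℕ} (B : OrthonormalBasis (Fin N) ℂ (EuclideanSpace ℂ (Fin N)))
    (v : EuclideanSpace ℂ (Fin N)) : ∑ k, ‖(inner ℂ (B k) v : ℂ)‖ ^ 2 = ‖v‖ ^ 2 := by
  have h1 : ‖B.repr v‖ = ‖v‖ := B.repr.norm_map v
  rw [← h1, EuclideanSpace.norm_eq, Real.sq_sqrt (by positivity)]
  exact Finset.sum_congr rfl fun k _ => by rw [B.repr_apply_apply]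

lemma gj_normsum {N : ℕ} (Φ : OrthonormalBasis (Fin N) ℂ (EuclideanSpace ℂ (Fin N)))
    (α : Fin N → ℂ) (S : Finset (Fin N)) :
    ‖(∑ t ∈ S, α t • Φ t : EuclideanSpace ℂ (Fin N))‖ ^ 2 = ∑ t ∈ S, ‖α t‖ ^ 2 := by
  have h1 := Φ.orthonormal.inner_sum α α S
  have h2 : (inner ℂ (∑ t ∈ S, α t • Φ t) (∑ t ∈ S, α t • Φ t) : ℂ) =
      ((‖(∑ t ∈ S, α t • Φ t : EuclideanSpace ℂ (Fin N))‖ : ℂ)) ^ 2 :=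
    inner_self_eq_norm_sq_to_K _
  have h3 : (∑ t ∈ S, (starRingEnd ℂ) (α t) * α t) = ((∑ t ∈ S, ‖α t‖ ^ 2 : ℝ) : ℂ) := by
    push_cast
    exact Finset.sum_congr rfl fun t _ => RCLike.conj_mul (α t)
  rw [h1, h3, ← Complex.ofReal_pow] at h2
  exact_mod_cast h2.symm

theorem ghobber_jaming
    {N : ℕ} (Φ Ψ : OrthonormalBasis (Fin N) ℂ (EuclideanSpace ℂ (Fin N)))
    (μ : ℝ) (hμ : μ = ⨆ j : Fin N, ⨆ k : Fin N, ‖(inner ℂ (Φ j) (Ψ k) : ℂ)‖)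
    (T F : Finset (Fin N)) (hTF : ((T.card : ℝ) * F.card) < 1 / μ ^ 2)
    (x : EuclideanSpace ℂ (Fin N)) :
    Real.sqrt (∑ n ∈ Tᶜ, ‖(inner ℂ x (Φ n) : ℂ)‖ ^ 2) +
      Real.sqrt (∑ n ∈ Fᶜ, ‖(inner ℂ x (Ψ n) : ℂ)‖ ^ 2) ≥
      (1 + 1 / (1 - μ * Real.sqrt ((T.card : ℝ) * F.card)))⁻¹ * ‖x‖ := by
  classical
  -- μ is nonnegative
  have hμ0 : 0 ≤ μ := by
    rcases isEmpty_or_nonempty (Fin N) with h | h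
    · rw [hμ, Real.iSup_of_isEmpty]
    · obtain ⟨j⟩ := h
      rw [hμ]
      have B2 : BddAbove (Set.range fun j : Fin N =>
          ⨆ k, ‖(inner ℂ (Φ j) (Ψ k) : ℂ)‖) := Set.Finite.bddAbove (Set.finite_range _)
      refine le_trans ?_ (le_ciSup B2 j)
      have B1 : BddAbove (Set.range fun k : Fin N => ‖(inner ℂ (Φ j) (Ψ k) : ℂ)‖) :=
        Set.Finite.bddAbove (Set.finite_range _)
      exact le_trans (norm_nonneg _) (le_ciSup B1 j)
  have hμpos : 0 < μ := by
    rcases lt_or_eq_of_le hμ0 with h | h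
    · exact h
    · exfalso
      rw [← h] at hTF
      norm_num at hTF
      have : (0:ℝ) ≤ (T.card : ℝ) * F.card := by positivity
      linarith
  -- coherence bound
  have hcoh : ∀ j k, ‖(inner ℂ (Φ j) (Ψ k) : ℂ)‖ ≤ μ := by
    intro j k
    rw [hμ]
    have B2 : BddAbove (Set.range fun j : Fin N =>
        ⨆ k, ‖(inner ℂ (Φ j) (Ψ k) : ℂ)‖) := Set.Finite.bddAbove (Set.finite_range _)
    have B1 : BddAbove (Set.range fun k : Fin N => ‖(inner ℂ (Φ j) (Ψ k) : ℂ)‖) :=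
      Set.Finite.bddAbove (Set.finite_range _)
    exact le_trans (le_ciSup B1 k) (le_ciSup B2 j)
  have hcoh' : ∀ k j, ‖(inner ℂ (Ψ k) (Φ j) : ℂ)‖ ≤ μ := by
    intro k j
    rw [norm_inner_symm]
    exact hcoh j k
  set s : ℝ := Real.sqrt ((T.card : ℝ) * F.card) with hs
  have hs0 : 0 ≤ s := Real.sqrt_nonneg _
  set c : ℝ := μ * s with hc
  have hc0 : 0 ≤ c := mul_nonneg hμ0 hs0
  have hs2 : s ^ 2 = (T.card : ℝ) * F.card := Real.sq_sqrt (by positivity)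
  have hc2 : c ^ 2 < 1 := by
    have h1 : c ^ 2 = μ ^ 2 * ((T.card : ℝ) * F.card) := by rw [hc, mul_pow, hs2]
    have h2 : μ ^ 2 * ((T.card : ℝ) * F.card) < μ ^ 2 * (1 / μ ^ 2) :=
      (mul_lt_mul_iff_right₀ (pow_pos hμpos 2)).2 hTF
    have h3 : μ ^ 2 * (1 / μ ^ 2) = 1 := by field_simp
    linarith
  have hc1 : c < 1 := by nlinarith
  -- coefficients
  set α : Fin N → ℂ := fun i => inner ℂ (Φ i) x with hα
  set y : EuclideanSpace ℂ (Fin N) := ∑ t ∈ T, α t • Φ t with hy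
  have hz : x - y = ∑ t ∈ Tᶜ, α t • Φ t := by
    have h1 : ∑ t ∈ T, α t • Φ t + ∑ t ∈ Tᶜ, α t • Φ t = ∑ t, α t • Φ t :=
      Finset.sum_add_sum_compl T _
    have h2 : ∑ i, α i • Φ i = x := Φ.sum_repr' x
    rw [hy, ← h2, ← h1]
    abel
  -- a = tail norm in Φ
  set a : ℝ := Real.sqrt (∑ n ∈ Tᶜ, ‖α n‖ ^ 2) with ha
  have ha0 : 0 ≤ a := Real.sqrt_nonneg _
  have ha2 : a ^ 2 = ∑ n ∈ Tᶜ, ‖α n‖ ^ 2 := Real.sq_sqrt (Finset.sum_nonneg fun i _ => sq_nonneg _)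
  have hxy2 : ‖x - y‖ ^ 2 = a ^ 2 := by rw [hz, gj_normsum Φ α, ha2]
  have hxy : ‖x - y‖ = a := by nlinarith [norm_nonneg (x - y)]
  have hy2 : ‖y‖ ^ 2 = ∑ t ∈ T, ‖α t‖ ^ 2 := gj_normsum Φ α T
  -- Pythagoras
  have hPyth : ‖x‖ ^ 2 = ‖y‖ ^ 2 + a ^ 2 := by
    have h1 : ∑ n, ‖α n‖ ^ 2 = ‖x‖ ^ 2 := gj_parseval Φ x
    have h2 : ∑ n ∈ T, ‖α n‖ ^ 2 + ∑ n ∈ Tᶜ, ‖α n‖ ^ 2 = ∑ n, ‖α n‖ ^ 2 :=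
      Finset.sum_add_sum_compl T _
    rw [hy2, ha2]
    linarith
  have hxle : ‖x‖ ≤ ‖y‖ + a := by nlinarith [norm_nonneg x, norm_nonneg y]
  -- key coherence estimate
  have hkey : ∑ k ∈ F, ‖(inner ℂ (Ψ k) y : ℂ)‖ ^ 2 ≤ c ^ 2 * ‖y‖ ^ 2 := by
    have hb : ∀ k, ‖(inner ℂ (Ψ k) y : ℂ)‖ ≤ μ * ∑ t ∈ T, ‖α t‖ := by
      intro k
      have h1 : (inner ℂ (Ψ k) y : ℂ) = ∑ t ∈ T, α t * inner ℂ (Ψ k) (Φ t) := by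
        rw [hy, inner_sum]
        exact Finset.sum_congr rfl fun t _ => inner_smul_right _ _ _
      rw [h1]
      calc ‖∑ t ∈ T, α t * (inner ℂ (Ψ k) (Φ t) : ℂ)‖
          ≤ ∑ t ∈ T, ‖α t * (inner ℂ (Ψ k) (Φ t) : ℂ)‖ := norm_sum_le _ _
        _ = ∑ t ∈ T, ‖α t‖ * ‖(inner ℂ (Ψ k) (Φ t) : ℂ)‖ := by
            exact Finset.sum_congr rfl fun t _ => norm_mul _ _
        _ ≤ ∑ t ∈ T, ‖α t‖ * μ := Finset.sum_le_sum fun t _ =>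
            mul_le_mul_of_nonneg_left (hcoh' k t) (norm_nonneg _)
        _ = μ * ∑ t ∈ T, ‖α t‖ := by rw [← Finset.sum_mul, mul_comm]
    have hsq : ∀ k, ‖(inner ℂ (Ψ k) y : ℂ)‖ ^ 2 ≤ μ ^ 2 * (T.card : ℝ) * ‖y‖ ^ 2 := by
      intro k
      have h1 : (∑ t ∈ T, ‖α t‖) ^ 2 ≤ (T.card : ℝ) * ∑ t ∈ T, ‖α t‖ ^ 2 := by
        exact_mod_cast sq_sum_le_card_mul_sum_sq (s := T) (f := fun t => ‖α t‖)
      have h2 : ‖(inner ℂ (Ψ k) y : ℂ)‖ ^ 2 ≤ (μ * ∑ t ∈ T, ‖α t‖) ^ 2 := by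
        have := hb k
        nlinarith [norm_nonneg (inner ℂ (Ψ k) y : ℂ)]
      rw [hy2]
      calc ‖(inner ℂ (Ψ k) y : ℂ)‖ ^ 2 ≤ (μ * ∑ t ∈ T, ‖α t‖) ^ 2 := h2
        _ = μ ^ 2 * (∑ t ∈ T, ‖α t‖) ^ 2 := by ring
        _ ≤ μ ^ 2 * ((T.card : ℝ) * ∑ t ∈ T, ‖α t‖ ^ 2) :=
            mul_le_mul_of_nonneg_left h1 (sq_nonneg μ)
        _ = μ ^ 2 * (T.card : ℝ) * ∑ t ∈ T, ‖α t‖ ^ 2 := by ring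
    calc ∑ k ∈ F, ‖(inner ℂ (Ψ k) y : ℂ)‖ ^ 2
        ≤ ∑ _k ∈ F, μ ^ 2 * (T.card : ℝ) * ‖y‖ ^ 2 := Finset.sum_le_sum fun k _ => hsq k
      _ = (F.card : ℝ) * (μ ^ 2 * (T.card : ℝ) * ‖y‖ ^ 2) := by
          rw [Finset.sum_const, nsmul_eq_mul]
      _ = c ^ 2 * ‖y‖ ^ 2 := by rw [hc, mul_pow, hs2]; ring
  -- lower bound for tail of y in Ψ
  have htail : (1 - c ^ 2) * ‖y‖ ^ 2 ≤ ∑ k ∈ Fᶜ, ‖(inner ℂ (Ψ k) y : ℂ)‖ ^ 2 := by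
    have h1 : ∑ k ∈ F, ‖(inner ℂ (Ψ k) y : ℂ)‖ ^ 2 + ∑ k ∈ Fᶜ, ‖(inner ℂ (Ψ k) y : ℂ)‖ ^ 2
        = ‖y‖ ^ 2 := by rw [Finset.sum_add_sum_compl F]; exact gj_parseval Ψ y
    linarith
  -- vectors for triangle inequality
  set u := gjRestr Fᶜ (fun k => (inner ℂ (Ψ k) x : ℂ)) with hu
  set v := gjRestr Fᶜ (fun k => (inner ℂ (Ψ k) y : ℂ)) with hv
  set w := gjRestr Fᶜ (fun k => (inner ℂ (Ψ k) (x - y) : ℂ)) with hw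
  have huvw : u = v + w := by
    ext k
    rw [PiLp.add_apply, hu, hv, hw]
    simp only [gjRestr, PiLp.toLp_apply]
    by_cases h : k ∈ Fᶜ
    · simp only [if_pos h, inner_sub_right]
      ring
    · simp only [if_neg h, add_zero]
  have hnu : ‖u‖ = Real.sqrt (∑ k ∈ Fᶜ, ‖(inner ℂ (Ψ k) x : ℂ)‖ ^ 2) := gjRestr_norm _ _
  have hnv : ‖v‖ = Real.sqrt (∑ k ∈ Fᶜ, ‖(inner ℂ (Ψ k) y : ℂ)‖ ^ 2) := gjRestr_norm _ _
  have hnw : ‖w‖ = Real.sqrt (∑ k ∈ Fᶜ, ‖(inner ℂ (Ψ k) (x - y) : ℂ)‖ ^ 2) := gjRestr_norm _ _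
  have hwa : ‖w‖ ≤ a := by
    have h1 : ∑ k ∈ Fᶜ, ‖(inner ℂ (Ψ k) (x - y) : ℂ)‖ ^ 2 ≤ a ^ 2 := by
      have h2 : ∑ k ∈ Fᶜ, ‖(inner ℂ (Ψ k) (x - y) : ℂ)‖ ^ 2
          ≤ ∑ k, ‖(inner ℂ (Ψ k) (x - y) : ℂ)‖ ^ 2 :=
        Finset.sum_le_sum_of_subset_of_nonneg (Finset.subset_univ _)
          (fun k _ _ => sq_nonneg _)
      rw [gj_parseval Ψ (x - y)] at h2
      linarith [hxy2]
    rw [hnw]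
    calc Real.sqrt (∑ k ∈ Fᶜ, ‖(inner ℂ (Ψ k) (x - y) : ℂ)‖ ^ 2)
        ≤ Real.sqrt (a ^ 2) := Real.sqrt_le_sqrt h1
      _ = a := Real.sqrt_sq ha0
  have hvlow : (1 - c) * ‖y‖ ≤ ‖v‖ := by
    have h1 : ((1 - c) * ‖y‖) ^ 2 ≤ (1 - c ^ 2) * ‖y‖ ^ 2 := by
      nlinarith [norm_nonneg y, sq_nonneg (1 - c)]
    have h2 : ((1 - c) * ‖y‖) ^ 2 ≤ ‖v‖ ^ 2 := by
      have h3 : ‖v‖ ^ 2 = ∑ k ∈ Fᶜ, ‖(inner ℂ (Ψ k) y : ℂ)‖ ^ 2 := by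
        rw [hnv, Real.sq_sqrt (Finset.sum_nonneg fun k _ => sq_nonneg _)]
      linarith
    nlinarith [norm_nonneg v, mul_nonneg (by linarith : (0:ℝ) ≤ 1 - c) (norm_nonneg y)]
  have hvu : ‖v‖ ≤ ‖u‖ + ‖w‖ := by
    calc ‖v‖ = ‖u - w‖ := by rw [huvw]; congr 1; abel
      _ ≤ ‖u‖ + ‖w‖ := norm_sub_le _ _
  -- lower bound for ‖u‖
  have hulow : (1 - c) * ‖x‖ - (2 - c) * a ≤ ‖u‖ := by
    have h1 : (1 - c) * ‖y‖ - a ≤ ‖u‖ := by linarith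
    have h2 : (1 - c) * (‖x‖ - a) ≤ (1 - c) * ‖y‖ :=
      mul_le_mul_of_nonneg_left (by linarith) (by linarith)
    nlinarith
  -- rewrite goal
  have hrw1 : ∀ n, ‖(inner ℂ x (Φ n) : ℂ)‖ = ‖α n‖ := fun n => norm_inner_symm x (Φ n)
  have hrw2 : ∀ n, ‖(inner ℂ x (Ψ n) : ℂ)‖ = ‖(inner ℂ (Ψ n) x : ℂ)‖ :=
    fun n => norm_inner_symm x (Ψ n)
  simp only [hrw1, hrw2]
  rw [← ha, ← hnu]
  have hconst : (1 + 1 / (1 - c))⁻¹ = (1 - c) / (2 - c) := by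
    have h1c : (0:ℝ) < 1 - c := by linarith
    rw [show (1:ℝ) + 1 / (1 - c) = (2 - c) / (1 - c) by field_simp; ring, inv_div]
  rw [hconst, ge_iff_le, div_mul_eq_mul_div, div_le_iff₀ (by linarith : (0:ℝ) < 2 - c)]
  have hu0 : 0 ≤ ‖u‖ := norm_nonneg u
  nlinarith [mul_nonneg (by linarith : (0:ℝ) ≤ 1 - c) hu0,
    mul_nonneg (by linarith : (0:ℝ) ≤ 1 - c) ha0]
end
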